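/- arXiv:1404.5023 — 7 statements merged into one kernel-verified Lean document; each statement's English description precedes it below -/
import Mathlib

section
/- Let (g,B) be a quadratic Lie algebra. The map T sending a skew-symmetric derivation D of g to the alternating bilinear form Ω_D defined by Ω_D(X,Y) = B(D(X),Y) is a linear bijection from Der_a(g) onto the space Z²(g,ℂ) of 2-cocycles of g with trivial coefficients. -/
open Module

/-- The space of 2-cocycles (trivial coefficients): alternating bilinear forms satisfying
the cocycle identity. -/
noncomputable def twoCocycles (g : Type) [LieRing g] [LieAlgebra ℂ g] :
    Submodule ℂ (g →ₗ[ℂ] g →ₗ[ℂ] ℂ) where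
  carrier := {Ω | (∀ x, Ω x x = 0) ∧
    ∀ x y z, Ω ⁅x, y⁆ z + Ω ⁅y, z⁆ x + Ω ⁅z, x⁆ y = 0}
  add_mem' := by
    rintro a b ⟨ha1, ha2⟩ ⟨hb1, hb2⟩
    refine ⟨fun x => ?_, fun x y z => ?_⟩
    · simp [ha1 x, hb1 x]
    · simp only [LinearMap.add_apply]
      linear_combination ha2 x y z + hb2 x y z
  smul_mem' := by
    rintro c a ⟨ha1, ha2⟩
    refine ⟨fun x => ?_, fun x y z => ?_⟩
    · simp [ha1 x]
    · simp only [LinearMap.smul_apply, smul_eq_mul]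
      linear_combination c * ha2 x y z
  zero_mem' := ⟨fun x => rfl, fun x y z => by simp⟩

/-- Skew-symmetric derivations of a quadratic Lie algebra `(g, B)`. -/
noncomputable def skewDer (g : Type) [LieRing g] [LieAlgebra ℂ g]
    (B : g →ₗ[ℂ] g →ₗ[ℂ] ℂ) : Submodule ℂ (Module.End ℂ g) where
  carrier := {D | (∀ x y, D ⁅x, y⁆ = ⁅D x, y⁆ + ⁅x, D y⁆) ∧
    ∀ x y, B (D x) y = - B x (D y)}
  add_mem' := by
    rintro a b ⟨ha1, ha2⟩ ⟨hb1, hb2⟩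
    refine ⟨fun x y => ?_, fun x y => ?_⟩
    · simp only [LinearMap.add_apply, ha1 x y, hb1 x y, add_lie, lie_add]
      abel
    · simp only [LinearMap.add_apply, map_add, ha2 x y, hb2 x y]
      ring
  smul_mem' := by
    rintro c a ⟨ha1, ha2⟩
    refine ⟨fun x y => ?_, fun x y => ?_⟩
    · simp [LinearMap.smul_apply, ha1 x y, smul_add, lie_smul, smul_lie]
    · simp only [LinearMap.smul_apply, map_smul, ha2 x y, smul_eq_mul]
      ring
  zero_mem' := ⟨fun x y => by simp, fun x y => by simp⟩

/-- For a quadratic Lie algebra `(g, B)`, the map `T` sending a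
skew-symmetric derivation `D` to the alternating bilinear form
`Ω_D (X, Y) = B (D X) Y` is a linear bijection from `Der_a(g)` onto `Z²(g, ℂ)`. -/
theorem skewDer_equiv_twoCocycles (g : Type) [LieRing g] [LieAlgebra ℂ g]
    [FiniteDimensional ℂ g] (B : g →ₗ[ℂ] g →ₗ[ℂ] ℂ)
    (hsym : ∀ x y, B x y = B y x)
    (hinv : ∀ x y z, B ⁅x, y⁆ z = B x ⁅y, z⁆)
    (hnd : ∀ x, (∀ y, B x y = 0) → x = 0) :
    ∃ T : skewDer g B ≃ₗ[ℂ] twoCocycles g,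
      ∀ (D : skewDer g B) (x y : g),
        ((T D : g →ₗ[ℂ] g →ₗ[ℂ] ℂ)) x y = B ((D : Module.End ℂ g) x) y := by
  have hndB : LinearMap.BilinForm.Nondegenerate B :=
    ⟨hnd, fun y hy => hnd y (fun x => by rw [hsym]; exact hy x)⟩
  set β := LinearMap.BilinForm.toDual B hndB with hβ
  have hβapp : ∀ (x : g), (β x : g →ₗ[ℂ] ℂ) = B x := by
    intro x; ext y
    exact LinearMap.BilinForm.toDual_def (B := B) hndB
  have hβsymm : ∀ (f : g →ₗ[ℂ] ℂ) (v : g), B (β.symm f) v = f v := by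
    intro f v
    rw [hβ]
    apply LinearMap.BilinForm.apply_toDual_symm_apply (B := B) (hB := hndB)
  -- rotation identity
  have hrot : ∀ u v w : g, B u ⁅v, w⁆ = B v ⁅w, u⁆ := by
    intro u v w
    rw [← hinv v w u, hsym]
  -- the cyclic sum vanishes for any skew derivation
  have key : ∀ (D : Module.End ℂ g), (∀ x y, D ⁅x, y⁆ = ⁅D x, y⁆ + ⁅x, D y⁆) →
      (∀ x y, B (D x) y = - B x (D y)) →
      ∀ x y z : g, B (D x) ⁅y, z⁆ + B (D y) ⁅z, x⁆ + B (D z) ⁅x, y⁆ = 0 := by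
    intro D hd hs x y z
    have e : ∀ a b c : g, B (D a) ⁅b, c⁆ = - B (D b) ⁅c, a⁆ - B (D c) ⁅a, b⁆ := by
      intro a b c
      have h1 : B (D a) ⁅b, c⁆ = - B a (D ⁅b, c⁆) := hs a _
      rw [h1, hd, map_add, hrot a (D b) c, hrot a b (D c), hrot b (D c) a]
      ring
    linear_combination (3 : ℂ)⁻¹ * (e x y z + e y z x + e z x y)
  -- forward map lands in twoCocycles
  have Fmem : ∀ D : skewDer g B, B ∘ₗ (D : Module.End ℂ g) ∈ twoCocycles g := by
    rintro ⟨D, hd, hs⟩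
    refine ⟨fun x => ?_, fun x y z => ?_⟩
    · have h1 : B (D x) x = - B x (D x) := hs x x
      have h2 : B x (D x) = B (D x) x := hsym _ _
      simp only [LinearMap.comp_apply]
      linear_combination (2 : ℂ)⁻¹ * (h1 - h2)
    · simp only [LinearMap.comp_apply]
      have e : ∀ a b c : g, B (D ⁅a, b⁆) c = B (D a) ⁅b, c⁆ + B (D b) ⁅c, a⁆ := by
        intro a b c
        rw [hd, map_add, LinearMap.add_apply, hinv (D a) b c, hinv a (D b) c,
          hrot a (D b) c]
      rw [e x y z, e y z x, e z x y]
      linear_combination 2 * key D hd hs x y z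
  -- backward map lands in skewDer
  have Gmem : ∀ Ω : twoCocycles g,
      β.symm.toLinearMap ∘ₗ (Ω : g →ₗ[ℂ] g →ₗ[ℂ] ℂ) ∈ skewDer g B := by
    rintro ⟨Ω, halt, hcoc⟩
    set G : Module.End ℂ g := β.symm.toLinearMap ∘ₗ Ω with hG
    have hGB : ∀ x y, B (G x) y = Ω x y := by
      intro x y
      simp only [hG, LinearMap.comp_apply, LinearEquiv.coe_coe]
      exact hβsymm _ _
    have hanti : ∀ x y, Ω x y = - Ω y x := by
      intro x y
      have h := halt (x + y)
      simp only [map_add, LinearMap.add_apply, halt x, halt y] at h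
      linear_combination h
    refine ⟨fun x y => ?_, fun x y => ?_⟩
    · -- derivation property via nondegeneracy
      have hz : ∀ z, B (G ⁅x, y⁆ - (⁅G x, y⁆ + ⁅x, G y⁆)) z = 0 := by
        intro z
        have h1 : B (G ⁅x, y⁆) z = Ω ⁅x, y⁆ z := hGB _ _
        have h2 : Ω ⁅x, y⁆ z + Ω ⁅y, z⁆ x + Ω ⁅z, x⁆ y = 0 := hcoc x y z
        have h3 : Ω ⁅y, z⁆ x = - Ω x ⁅y, z⁆ := hanti _ _
        have h4 : Ω ⁅z, x⁆ y = - Ω y ⁅z, x⁆ := hanti _ _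
        have h5 : Ω x ⁅y, z⁆ = B (G x) ⁅y, z⁆ := (hGB _ _).symm
        have h6 : Ω y ⁅z, x⁆ = B (G y) ⁅z, x⁆ := (hGB _ _).symm
        have h7 : B ⁅G x, y⁆ z = B (G x) ⁅y, z⁆ := hinv _ _ _
        have h8 : B ⁅x, G y⁆ z = B (G y) ⁅z, x⁆ := by
          rw [hinv x (G y) z, hrot x (G y) z]
        simp only [map_sub, map_add, LinearMap.sub_apply, LinearMap.add_apply]
        linear_combination h1 + h2 - h3 - h4 + h5 + h6 - h7 - h8
      have := hnd _ hz
      rw [sub_eq_zero] at this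
      exact this
    · have h1 : B (G x) y = Ω x y := hGB _ _
      have h2 : B (G y) x = Ω y x := hGB _ _
      have h3 : B x (G y) = B (G y) x := hsym _ _
      have h4 : Ω x y = - Ω y x := hanti _ _
      linear_combination h1 + h4 + h2 + h3
  refine ⟨{
    toFun := fun D => ⟨B ∘ₗ (D : Module.End ℂ g), Fmem D⟩
    map_add' := by
      intro a b
      apply Subtype.ext
      simp [LinearMap.comp_add]
    map_smul' := by
      intro c a
      apply Subtype.ext
      simp [LinearMap.comp_smul]
    invFun := fun Ω => ⟨β.symm.toLinearMap ∘ₗ (Ω : g →ₗ[ℂ] g →ₗ[ℂ] ℂ), Gmem Ω⟩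
    left_inv := by
      intro D
      apply Subtype.ext
      ext x
      apply β.injective
      simp only [LinearMap.comp_apply, LinearEquiv.coe_coe,
        LinearEquiv.apply_symm_apply]
      rw [hβapp]
    right_inv := by
      intro Ω
      apply Subtype.ext
      ext x y
      simp only [LinearMap.comp_apply, LinearEquiv.coe_coe]
      exact hβsymm _ _ }, fun D x y => rfl⟩
end

section
/- For every quadratic Lie algebra (g,B) there is a linear isomorphism of vector spaces H²(g,ℂ) ≅ Der_a(g)/ad(g); in particular dim Z²(g,ℂ) − dim B²(g,ℂ) = dim Der_a(g) − dim ad(g). -/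
open Module

attribute [local instance 100] LieRing.ofAssociativeRing

/-- The space of 2-coboundaries (trivial coefficients). -/
noncomputable def twoCoboundaries (g : Type) [LieRing g] [LieAlgebra ℂ g] :
    Submodule ℂ (g →ₗ[ℂ] g →ₗ[ℂ] ℂ) where
  carrier := {Ω | ∃ f : g →ₗ[ℂ] ℂ, ∀ x y, Ω x y = f ⁅x, y⁆}
  add_mem' := by
    rintro a b ⟨f, hf⟩ ⟨f', hf'⟩
    exact ⟨f + f', fun x y => by simp [hf x y, hf' x y]⟩
  smul_mem' := by
    rintro c a ⟨f, hf⟩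
    exact ⟨c • f, fun x y => by simp [hf x y]⟩
  zero_mem' := ⟨0, fun x y => by simp⟩

/-- The space `ad(g)` of inner derivations, as a submodule of endomorphisms. -/
noncomputable def adRange (g : Type) [LieRing g] [LieAlgebra ℂ g] :
    Submodule ℂ (Module.End ℂ g) :=
  LinearMap.range (LieAlgebra.ad ℂ g).toLinearMap

/-- For a quadratic Lie algebra `(g, B)` there is a linear isomorphism
`H²(g, ℂ) ≅ Der_a(g) / ad(g)`; in particular
`dim Z²(g, ℂ) − dim B²(g, ℂ) = dim Der_a(g) − dim ad(g)`. -/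
theorem H2_equiv_skewDer_quotient_ad (g : Type) [LieRing g] [LieAlgebra ℂ g]
    [FiniteDimensional ℂ g] (B : g →ₗ[ℂ] g →ₗ[ℂ] ℂ)
    (hsym : ∀ x y, B x y = B y x)
    (hinv : ∀ x y z, B ⁅x, y⁆ z = B x ⁅y, z⁆)
    (hnd : ∀ x, (∀ y, B x y = 0) → x = 0) :
    Nonempty
      ((@HasQuotient.Quotient ↥(twoCocycles g) (Submodule ℂ ↥(twoCocycles g))
          (Submodule.hasQuotient (R := ℂ) (M := ↥(twoCocycles g))) ((twoCoboundaries g).comap (twoCocycles g).subtype)) ≃ₗ[ℂ]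
        (@HasQuotient.Quotient ↥(skewDer g B) (Submodule ℂ ↥(skewDer g B))
          (Submodule.hasQuotient (R := ℂ) (M := ↥(skewDer g B))) ((adRange g).comap (skewDer g B).subtype))) ∧
    (finrank ℂ (twoCocycles g) : ℤ) - finrank ℂ (twoCoboundaries g)
      = (finrank ℂ (skewDer g B) : ℤ) - finrank ℂ (adRange g) := by
  classical
  -- `B` is bijective as a map into the dual space.
  have hBinj : Function.Injective B := by
    intro x y h
    have hz : ∀ z, B (x - y) z = 0 := by intro z; simp [map_sub, h]
    exact sub_eq_zero.mp (hnd _ hz)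
  have hBsurj : Function.Surjective B :=
    (LinearMap.injective_iff_surjective_of_finrank_eq_finrank
      (Subspace.dual_finrank_eq (V := g)).symm).mp hBinj
  -- the comparison map `D ↦ B(D ·, ·)`
  let ψ : Module.End ℂ g →ₗ[ℂ] (g →ₗ[ℂ] g →ₗ[ℂ] ℂ) :=
    { toFun := fun D => B ∘ₗ D
      map_add' := fun a b => by ext x y; simp
      map_smul' := fun c a => by ext x y; simp }
  have hψ : ∀ (D : Module.End ℂ g) (x y : g), ψ D x y = B (D x) y := fun D x y => rfl
  have hψinj : Function.Injective ψ := by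
    intro D E h
    ext x
    apply hBinj
    ext y
    have := congrArg (fun F => F x y) h
    simpa [hψ] using this
  -- antisymmetry of cocycles
  have halt : ∀ Ω ∈ twoCocycles g, ∀ x y : g, Ω x y = - Ω y x := by
    rintro Ω ⟨h1, _⟩ x y
    have h := h1 (x + y)
    simp only [map_add, LinearMap.add_apply, h1 x, h1 y] at h
    linear_combination h
  -- skew derivations map onto cocycles
  have hmap1 : Submodule.map ψ (skewDer g B) = twoCocycles g := by
    apply le_antisymm
    · rintro Ω ⟨D, ⟨hD1, hD2⟩, rfl⟩
      refine ⟨fun x => ?_, fun x y z => ?_⟩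
      · have h := hD2 x x
        rw [hsym x (D x)] at h
        have h3 : (2 : ℂ) * B (D x) x = 0 := by linear_combination h
        have h2 : B (D x) x = 0 := (mul_eq_zero.mp h3).resolve_left two_ne_zero
        simpa [hψ] using h2
      · simp only [hψ, hD1, map_add, LinearMap.add_apply]
        have e1 : B ⁅x, D y⁆ z = B ⁅D y, z⁆ x := by
          rw [hinv, hsym]
        have e2 : B ⁅y, D z⁆ x = B ⁅D z, x⁆ y := by
          rw [hinv, hsym]
        have e3 : B ⁅z, D x⁆ y = B ⁅D x, y⁆ z := by
          rw [hinv, hsym]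
        have e4 : B ⁅D x, y⁆ z = - B ⁅D y, z⁆ x - B ⁅D z, x⁆ y := by
          have h5 : B ⁅D x, y⁆ z = - (B x ⁅D y, z⁆ + B x ⁅y, D z⁆) := by
            rw [hinv, hD2, hD1, map_add]
          have h7 : B x ⁅D y, z⁆ = B ⁅D y, z⁆ x := hsym _ _
          have h8 : B x ⁅y, D z⁆ = B ⁅D z, x⁆ y := by
            rw [hsym]; exact e2
          rw [h5, h7, h8]; ring
        linear_combination e1 + e2 + e3 + 2 * e4
    · rintro Ω hΩ
      obtain ⟨h1, h2⟩ := hΩ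
      -- define D x as the unique vector with B (D x) = Ω x
      have hpre : ∀ x : g, ∃ w : g, B w = Ω x := fun x => hBsurj (Ω x)
      choose Dfun hDfun using hpre
      have hDadd : ∀ x y, Dfun (x + y) = Dfun x + Dfun y := by
        intro x y
        apply hBinj
        rw [map_add, hDfun, hDfun, hDfun, map_add]
      have hDsmul : ∀ (c : ℂ) x, Dfun (c • x) = c • Dfun x := by
        intro c x
        apply hBinj
        rw [map_smul, hDfun, hDfun, map_smul]
      let D : Module.End ℂ g := { toFun := Dfun, map_add' := hDadd, map_smul' := hDsmul }
      have hDB : ∀ x y : g, B (D x) y = Ω x y := by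
        intro x y; show B (Dfun x) y = Ω x y; rw [hDfun]
      have hskew : ∀ x y : g, B (D x) y = - B x (D y) := by
        intro x y
        rw [hDB, hsym x (D y), hDB, halt Ω ⟨h1, h2⟩ x y]
      have hder : ∀ x y : g, D ⁅x, y⁆ = ⁅D x, y⁆ + ⁅x, D y⁆ := by
        intro x y
        have key : ∀ z : g, B (D ⁅x, y⁆ - (⁅D x, y⁆ + ⁅x, D y⁆)) z = 0 := by
          intro z
          have c1 : B (D ⁅x, y⁆) z = Ω ⁅x, y⁆ z := hDB _ _
          have c2 : Ω ⁅x, y⁆ z = - Ω ⁅y, z⁆ x - Ω ⁅z, x⁆ y := by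
            linear_combination h2 x y z
          have c3 : Ω ⁅y, z⁆ x = - Ω x ⁅y, z⁆ := halt Ω ⟨h1, h2⟩ _ _
          have c4 : Ω ⁅z, x⁆ y = - Ω y ⁅z, x⁆ := halt Ω ⟨h1, h2⟩ _ _
          have c5 : Ω x ⁅y, z⁆ = B ⁅D x, y⁆ z := by
            rw [← hDB, ← hinv]
          have c6 : Ω y ⁅z, x⁆ = B ⁅x, D y⁆ z := by
            rw [← hDB, ← hinv, hsym]
            rw [hinv]
          simp only [map_sub, map_add, LinearMap.sub_apply, LinearMap.add_apply]
          linear_combination c1 + c2 - c3 - c4 + c5 + c6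
        have hz := hnd _ (fun z => key z)
        have : D ⁅x, y⁆ - (⁅D x, y⁆ + ⁅x, D y⁆) = 0 := hz
        linear_combination (norm := abel_nf) this
      refine ⟨D, ⟨hder, hskew⟩, ?_⟩
      ext x y
      exact hDB x y
  -- inner derivations map onto coboundaries
  have hadskew : adRange g ≤ skewDer g B := by
    rintro E ⟨w, rfl⟩
    refine ⟨fun x y => leibniz_lie w x y, fun x y => ?_⟩
    show B ⁅w, x⁆ y = - B x ⁅w, y⁆
    rw [hinv, hsym x ⁅w, y⁆, hinv, ← lie_skew y x, map_neg, neg_neg]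
  have hmap2 : Submodule.map ψ (adRange g) = twoCoboundaries g := by
    apply le_antisymm
    · rintro Ω ⟨E, ⟨w, rfl⟩, rfl⟩
      refine ⟨B w, fun x y => ?_⟩
      show B ⁅w, x⁆ y = B w ⁅x, y⁆
      exact hinv w x y
    · rintro Ω ⟨f, hf⟩
      obtain ⟨w, hw⟩ := hBsurj f
      refine ⟨(LieAlgebra.ad ℂ g).toLinearMap w, ⟨w, rfl⟩, ?_⟩
      ext x y
      show B ⁅w, x⁆ y = Ω x y
      rw [hinv, hw, ← hf]
  -- the linear equivalence between skewDer and twoCocycles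
  let e : (skewDer g B) ≃ₗ[ℂ] (twoCocycles g) :=
    (Submodule.equivMapOfInjective ψ hψinj (skewDer g B)).trans
      (LinearEquiv.ofEq _ _ hmap1)
  have he : ∀ x : (skewDer g B), (e x : g →ₗ[ℂ] g →ₗ[ℂ] ℂ) = ψ x := fun x => rfl
  have hequiv : Submodule.map (e : (skewDer g B) →ₗ[ℂ] (twoCocycles g))
      ((adRange g).comap (skewDer g B).subtype)
      = (twoCoboundaries g).comap (twoCocycles g).subtype := by
    apply le_antisymm
    · rintro Ω ⟨⟨D, hD⟩, hDad, rfl⟩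
      show (↑(e ⟨D, hD⟩) : g →ₗ[ℂ] g →ₗ[ℂ] ℂ) ∈ twoCoboundaries g
      rw [he]
      rw [← hmap2]
      exact ⟨D, hDad, rfl⟩
    · rintro ⟨Ω, hΩ⟩ hΩb
      have : Ω ∈ twoCoboundaries g := hΩb
      rw [← hmap2] at this
      obtain ⟨D, hDad, rfl⟩ := this
      have hDs : D ∈ skewDer g B := hadskew hDad
      refine ⟨⟨D, hDs⟩, hDad, ?_⟩
      apply Subtype.ext
      exact he ⟨D, hDs⟩
  constructor
  · exact ⟨(Submodule.Quotient.equiv _ _ e hequiv).symm⟩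
  · have h1 : finrank ℂ (twoCocycles g) = finrank ℂ (skewDer g B) :=
      (LinearEquiv.finrank_eq e).symm
    have h2 : finrank ℂ (twoCoboundaries g) = finrank ℂ (adRange g) := by
      rw [← hmap2]
      exact (LinearEquiv.finrank_eq (Submodule.equivMapOfInjective ψ hψinj (adRange g))).symm
    rw [h1, h2]
end

section
/- Let (g,B,ω) be a finite-dimensional symplectic quadratic Lie algebra and let φ : g → g* be the linear isomorphism φ(X) = B(X,·). Then the assignment ad(X) ↦ ad(φ⁻¹(ω(X,·))) yields a well-defined linear map 𝒟 : ad(g) → ad(g) (i.e. ad(X) = ad(X′) implies ad(φ⁻¹(ω(X,·))) = ad(φ⁻¹(ω(X′,·)))), and 𝒟 is a bijective derivation of the Lie algebra ad(g), i.e. 𝒟([u,v]) = [𝒟(u),v] + [u,𝒟(v)] for all u,v ∈ ad(g) and 𝒟 is invertible. -/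
attribute [local instance 100] LieRing.ofAssociativeRing

/-- For a finite-dimensional symplectic quadratic Lie algebra `(g, B, ω)`,
the assignment `ad X ↦ ad (φ⁻¹ (ω (X, ·)))`, where `φ(X) = B(X, ·)`, is well defined and
yields a linear map `𝒟` on the Lie algebra `ad(g)` of inner derivations which is a
bijective derivation. -/
theorem symplectic_quadratic_ad_invertible_derivation
    (g : Type) [LieRing g] [LieAlgebra ℂ g] [FiniteDimensional ℂ g]
    (B : g →ₗ[ℂ] g →ₗ[ℂ] ℂ)
    (hBsym : ∀ x y, B x y = B y x)
    (hBinv : ∀ x y z, B ⁅x, y⁆ z = B x ⁅y, z⁆)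
    (hBnd : ∀ x, (∀ y, B x y = 0) → x = 0)
    (ω : g →ₗ[ℂ] g →ₗ[ℂ] ℂ)
    (hωalt : ∀ x, ω x x = 0)
    (hωnd : ∀ x, (∀ y, ω x y = 0) → x = 0)
    (hωcocycle : ∀ x y z, ω ⁅x, y⁆ z + ω ⁅y, z⁆ x + ω ⁅z, x⁆ y = 0) :
    -- well-definedness of the assignment
    (∀ X X' Y Y' : g, LieAlgebra.ad ℂ g X = LieAlgebra.ad ℂ g X' →
      (∀ z, B Y z = ω X z) → (∀ z, B Y' z = ω X' z) →
      LieAlgebra.ad ℂ g Y = LieAlgebra.ad ℂ g Y') ∧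
    -- the resulting linear map `𝒟` is an invertible derivation of `ad(g)`
    ∃ D : (LieAlgebra.ad ℂ g).range →ₗ[ℂ] (LieAlgebra.ad ℂ g).range,
      (∀ X Y : g, (∀ z, B Y z = ω X z) →
        D ⟨LieAlgebra.ad ℂ g X, X, rfl⟩ = ⟨LieAlgebra.ad ℂ g Y, Y, rfl⟩) ∧
      (∀ u v : (LieAlgebra.ad ℂ g).range, D ⁅u, v⁆ = ⁅D u, v⁆ + ⁅u, D v⁆) ∧
      Function.Bijective D := by
  classical
  -- skew-symmetry of ω
  have hωskew : ∀ x y, ω x y = - ω y x := by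
    intro x y
    have h := hωalt (x + y)
    simp only [map_add, LinearMap.add_apply, hωalt] at h
    linear_combination h
  -- B is injective as a map to the dual
  have Binj : Function.Injective B := by
    rw [← LinearMap.ker_eq_bot]
    rw [LinearMap.ker_eq_bot']
    intro x hx
    exact hBnd x (fun y => by rw [hx]; rfl)
  have Bsurj : Function.Surjective B :=
    (LinearMap.injective_iff_surjective_of_finrank_eq_finrank
      Subspace.dual_finrank_eq.symm).mp Binj
  set e : g ≃ₗ[ℂ] (g →ₗ[ℂ] ℂ) := LinearEquiv.ofBijective B ⟨Binj, Bsurj⟩ with he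
  set δ : g →ₗ[ℂ] g := e.symm.toLinearMap ∘ₗ ω with hδdef
  have hδ : ∀ x z, B (δ x) z = ω x z := by
    intro x z
    have : B (δ x) = ω x := by
      show e (e.symm (ω x)) = ω x
      exact e.apply_symm_apply _
    rw [this]
  -- uniqueness: if B Y = ω X then Y = δ X
  have huniq : ∀ X Y : g, (∀ z, B Y z = ω X z) → Y = δ X := by
    intro X Y hY
    apply Binj
    ext z
    rw [hY z, hδ X z]
  have δinj : Function.Injective δ := by
    rw [← LinearMap.ker_eq_bot, LinearMap.ker_eq_bot']
    intro x hx
    apply hωnd x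
    intro y
    rw [← hδ x y, hx, map_zero]
    rfl
  -- δ is a derivation of g
  have δder : ∀ x y, δ ⁅x, y⁆ = ⁅δ x, y⁆ + ⁅x, δ y⁆ := by
    intro x y
    have key : ∀ z, B (δ ⁅x, y⁆ - (⁅δ x, y⁆ + ⁅x, δ y⁆)) z = 0 := by
      intro z
      have h1 : B ⁅δ x, y⁆ z = - ω ⁅y, z⁆ x := by
        rw [hBinv, hδ, hωskew]
      have h2 : B ⁅x, δ y⁆ z = - ω ⁅z, x⁆ y := by
        have hsk : B ⁅x, δ y⁆ z = - B ⁅δ y, x⁆ z := by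
          rw [← LinearMap.neg_apply, ← map_neg B, lie_skew]
        rw [hsk, hBinv, hδ]
        have : ω y ⁅x, z⁆ = - ω ⁅x, z⁆ y := hωskew _ _
        rw [this]
        congr 1
        rw [← lie_skew x z, map_neg, LinearMap.neg_apply, hωskew]
        ring
      have h3 : B (δ ⁅x, y⁆) z = ω ⁅x, y⁆ z := hδ _ _
      have hc := hωcocycle x y z
      simp only [map_sub, map_add, LinearMap.sub_apply, LinearMap.add_apply, h1, h2, h3]
      linear_combination hc
    exact sub_eq_zero.mp (hBnd _ key)
  -- central elements go to central elements
  have L1 : ∀ c : g, (∀ a : g, ⁅c, a⁆ = 0) → ∀ a : g, ⁅δ c, a⁆ = 0 := by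
    intro c hc a
    apply hBnd
    intro b
    rw [hBinv, hδ]
    have h := hωcocycle a b c
    rw [show ⁅b, c⁆ = (0:g) from by rw [← neg_zero, ← hc b, lie_skew], hc a] at h
    simp only [map_zero, LinearMap.zero_apply, add_zero] at h
    rw [hωskew, h, neg_zero]
  -- congruence: ad x = ad x' implies ad (δ x) = ad (δ x')
  have hcong : ∀ x x' : g, LieAlgebra.ad ℂ g x = LieAlgebra.ad ℂ g x' →
      LieAlgebra.ad ℂ g (δ x) = LieAlgebra.ad ℂ g (δ x') := by
    intro x x' h
    have hc : ∀ a : g, ⁅x - x', a⁆ = 0 := by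
      intro a
      have h2 := LinearMap.ext_iff.mp h a
      simp only [LieAlgebra.ad_apply] at h2
      rw [sub_lie, h2, sub_self]
    have h2 := L1 (x - x') hc
    ext a
    have h3 := h2 a
    rw [map_sub, sub_lie] at h3
    simpa [LieAlgebra.ad_apply, sub_eq_zero] using h3
  constructor
  · intro X X' Y Y' hXX' hY hY'
    rw [huniq X Y hY, huniq X' Y' hY']
    exact hcong X X' hXX'
  -- the projection onto the range of ad
  set π : g →ₗ[ℂ] (LieAlgebra.ad ℂ g).range :=
    { toFun := fun x => ⟨LieAlgebra.ad ℂ g x, x, rfl⟩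
      map_add' := fun x y => Subtype.ext (map_add (LieAlgebra.ad ℂ g).toLinearMap x y)
      map_smul' := fun c x => Subtype.ext (map_smul (LieAlgebra.ad ℂ g).toLinearMap c x) }
    with hπ
  have hπval : ∀ x : g, ((π x : (LieAlgebra.ad ℂ g).range) : Module.End ℂ g)
      = LieAlgebra.ad ℂ g x := fun _ => rfl
  have hπs : Function.Surjective π := by
    rintro ⟨u, x, rfl⟩
    exact ⟨x, rfl⟩
  obtain ⟨s, hs⟩ := π.exists_rightInverse_of_surjective (LinearMap.range_eq_top.2 hπs)
  set D : (LieAlgebra.ad ℂ g).range →ₗ[ℂ] (LieAlgebra.ad ℂ g).range :=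
    (π ∘ₗ δ) ∘ₗ s with hD
  have Dapp : ∀ u, D u = π (δ (s u)) := fun u => rfl
  have hsπ : ∀ u, π (s u) = u := fun u => LinearMap.ext_iff.mp hs u
  have key : ∀ x : g, D (π x) = π (δ x) := by
    intro x
    have h2 : LieAlgebra.ad ℂ g (s (π x)) = LieAlgebra.ad ℂ g x := by
      have := congrArg Subtype.val (hsπ (π x))
      simpa [hπval] using this
    rw [Dapp]
    exact Subtype.ext (hcong _ _ h2)
  have hb : ∀ a b : g, ⁅π a, π b⁆ = π ⁅a, b⁆ := by
    intro a b
    apply Subtype.ext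
    rw [LieSubalgebra.coe_bracket]
    show ⁅LieAlgebra.ad ℂ g a, LieAlgebra.ad ℂ g b⁆ = LieAlgebra.ad ℂ g ⁅a, b⁆
    exact (LieHom.map_lie _ _ _).symm
  haveI : FiniteDimensional ℂ ((LieAlgebra.ad ℂ g).range) := by
    infer_instance
  -- injectivity
  have hZmap : (LinearMap.ker π).map δ = LinearMap.ker π := by
    have hle : (LinearMap.ker π).map δ ≤ LinearMap.ker π := by
      rintro _ ⟨c, hc, rfl⟩
      have hc0 : LieAlgebra.ad ℂ g c = 0 := by
        have := congrArg Subtype.val (LinearMap.mem_ker.mp hc)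
        simpa [hπval] using this
      have hca : ∀ a : g, ⁅c, a⁆ = 0 := by
        intro a
        have := LinearMap.ext_iff.mp hc0 a
        simpa [LieAlgebra.ad_apply] using this
      have h2 := L1 c hca
      apply LinearMap.mem_ker.mpr
      apply Subtype.ext
      rw [hπval]
      ext a
      simpa [LieAlgebra.ad_apply] using h2 a
    refine Submodule.eq_of_le_of_finrank_le hle (le_of_eq ?_)
    exact (Submodule.equivMapOfInjective δ δinj (LinearMap.ker π)).finrank_eq
  have Dinj : Function.Injective D := by
    rw [← LinearMap.ker_eq_bot, LinearMap.ker_eq_bot']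
    intro u hu
    have h0 : δ (s u) ∈ (LinearMap.ker π).map δ := by
      rw [hZmap]
      apply LinearMap.mem_ker.mpr
      rw [← Dapp]
      exact hu
    obtain ⟨z, hz, hze⟩ := h0
    have hz2 : s u = z := δinj hze.symm
    rw [← hsπ u, hz2]
    exact LinearMap.mem_ker.mp hz
  refine ⟨D, ?_, ?_, Dinj, LinearMap.injective_iff_surjective.mp Dinj⟩
  · intro X Y hY
    have hYδ : Y = δ X := huniq X Y hY
    subst hYδ
    exact key X
  · intro u v
    obtain ⟨x, rfl⟩ := hπs u
    obtain ⟨y, rfl⟩ := hπs v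
    rw [hb x y, key, δder, map_add, key x, key y, hb, hb]
end

section
/- For every p ≥ 2, (j_{2p}, B̄) is a quadratic Lie algebra (B̄ is symmetric, invariant and nondegenerate), and the alternating bilinear form ω determined on basis vectors by ω(X_0,Y_0) = 1 and ω(X_i,Y_i) = i for 1 ≤ i ≤ p (all other values on pairs of basis vectors, up to antisymmetry, being zero) is a symplectic structure on j_{2p}; hence (j_{2p},B̄,ω) is a symplectic quadratic Lie algebra. -/
noncomputable def triB {g : Type} [LieRing g] [LieAlgebra ℂ g]
    (B : g →ₗ[ℂ] g →ₗ[ℂ] ℂ) : g →ₗ[ℂ] g →ₗ[ℂ] g →ₗ[ℂ] ℂ :=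
  LinearMap.mk₂ ℂ (fun x y => B ⁅x, y⁆ - (B x).comp (LieAlgebra.ad ℂ g y))
    (by intro x x' y; ext z; simp [add_lie]; ring)
    (by intro c x y; ext z; simp [smul_lie]; ring)
    (by intro x y y'; ext z; simp [lie_add, add_lie]; ring)
    (by intro c x y; ext z; simp [lie_smul, smul_lie]; ring)

@[simp] lemma triB_apply {g : Type} [LieRing g] [LieAlgebra ℂ g]
    (B : g →ₗ[ℂ] g →ₗ[ℂ] ℂ) (x y z : g) :
    triB B x y z = B ⁅x, y⁆ z - B x ⁅y, z⁆ := by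
  simp [triB]

noncomputable def triW {g : Type} [LieRing g] [LieAlgebra ℂ g]
    (ω : g →ₗ[ℂ] g →ₗ[ℂ] ℂ) : g →ₗ[ℂ] g →ₗ[ℂ] g →ₗ[ℂ] ℂ :=
  LinearMap.mk₂ ℂ (fun x y => ω ⁅x, y⁆ + (ω.flip x).comp (LieAlgebra.ad ℂ g y)
      - (ω.flip y).comp (LieAlgebra.ad ℂ g x))
    (by intro x x' y; ext z; simp [add_lie, lie_add]; ring)
    (by intro c x y; ext z; simp [smul_lie, lie_smul]; ring)
    (by intro x y y'; ext z; simp [lie_add, add_lie]; ring)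
    (by intro c x y; ext z; simp [lie_smul, smul_lie]; ring)

@[simp] lemma triW_apply {g : Type} [LieRing g] [LieAlgebra ℂ g]
    (ω : g →ₗ[ℂ] g →ₗ[ℂ] ℂ) (x y z : g) :
    triW ω x y z = ω ⁅x, y⁆ z + ω ⁅y, z⁆ x + ω ⁅z, x⁆ y := by
  simp [triW]
  rw [show ⁅z, x⁆ = -⁅x, z⁆ from (lie_skew z x).symm]
  simp only [map_neg, LinearMap.neg_apply]; ring

set_option maxHeartbeats 2000000 in
/-- For `p ≥ 2`, the nilpotent Jordan-type Lie algebra `j_{2p}`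
(given by a basis `{X_0, …, X_p, Y_0, …, Y_p}` with the indicated brackets), together
with the bilinear form `B̄` and the alternating form `ω` determined by
`ω(X_0, Y_0) = 1`, `ω(X_i, Y_i) = i`, is a symplectic quadratic Lie algebra:
`B̄` is symmetric, invariant and nondegenerate, and `ω` is a nondegenerate 2-cocycle. -/
theorem jordanType_symplectic_quadratic
    (p : ℕ) (hp : 2 ≤ p)
    (g : Type) [LieRing g] [LieAlgebra ℂ g]
    (b : Module.Basis (Fin (p+1) ⊕ Fin (p+1)) ℂ g)
    -- notation: `X i = b (Sum.inl i)`, `Y i = b (Sum.inr i)`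
    (X : Fin (p+1) → g) (Y : Fin (p+1) → g)
    (hX : ∀ i, X i = b (Sum.inl i)) (hY : ∀ i, Y i = b (Sum.inr i))
    -- the nonzero brackets
    (h1 : ∀ (i : ℕ) (h2i : 2 ≤ i) (hip : i ≤ p),
      ⁅Y 0, X ⟨i, by omega⟩⁆ = X ⟨i - 1, by omega⟩)
    (h2 : ∀ (i : ℕ) (h1i : 1 ≤ i) (hip : i + 1 ≤ p),
      ⁅Y 0, Y ⟨i, by omega⟩⁆ = -(Y ⟨i + 1, by omega⟩))
    (h3 : ∀ (i : ℕ) (h1i : 1 ≤ i) (hip : i + 1 ≤ p),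
      ⁅X ⟨i + 1, by omega⟩, Y ⟨i, by omega⟩⁆ = X 0)
    -- all other brackets of basis vectors vanish
    (h4 : ∀ i j, ⁅X i, X j⁆ = 0)
    (h5 : ⁅Y 0, X 0⁆ = 0)
    (h6 : ⁅Y 0, X 1⁆ = 0)
    (h7 : ⁅Y 0, Y ⟨p, by omega⟩⁆ = 0)
    (h8 : ∀ i j : Fin (p+1), i ≠ 0 → j ≠ 0 → ⁅Y i, Y j⁆ = 0)
    (h9 : ∀ i j : Fin (p+1), j ≠ 0 → i.val ≠ j.val + 1 → ⁅X i, Y j⁆ = 0)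
    -- the bilinear form B̄
    (B : g →ₗ[ℂ] g →ₗ[ℂ] ℂ)
    (hB1 : ∀ i j, B (X i) (X j) = 0)
    (hB2 : ∀ i j, B (Y i) (Y j) = 0)
    (hB3 : ∀ i j, B (X i) (Y j) = if i = j then 1 else 0)
    (hB4 : ∀ i j, B (Y i) (X j) = if i = j then 1 else 0)
    -- the alternating form ω
    (ω : g →ₗ[ℂ] g →ₗ[ℂ] ℂ)
    (hw1 : ∀ i j, ω (X i) (X j) = 0)
    (hw2 : ∀ i j, ω (Y i) (Y j) = 0)
    (hw3 : ∀ i j, ω (X i) (Y j) =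
      if i = j then (if i = 0 then 1 else (i.val : ℂ)) else 0)
    (hw4 : ∀ i j, ω (Y i) (X j) =
      -(if i = j then (if i = 0 then 1 else (i.val : ℂ)) else 0)) :
    -- `(g, B̄)` is a quadratic Lie algebra …
    (∀ x y, B x y = B y x) ∧
    (∀ x y z, B ⁅x, y⁆ z = B x ⁅y, z⁆) ∧
    (∀ x, (∀ y, B x y = 0) → x = 0) ∧
    -- … and `ω` is a symplectic structure on it
    (∀ x, ω x x = 0) ∧
    (∀ x, (∀ y, ω x y = 0) → x = 0) ∧
    (∀ x y z, ω ⁅x, y⁆ z + ω ⁅y, z⁆ x + ω ⁅z, x⁆ y = 0) := by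
  have hv0 : (0 : Fin (p+1)).val = 0 := rfl
  have hv1 : (1 : Fin (p+1)).val = 1 := by
    simp [Fin.val_one', Nat.mod_eq_of_lt (by omega : 1 < p + 1)]
  have hrX : ∀ i, b.repr (X i) = Finsupp.single (Sum.inl i) 1 := fun i => by
    rw [hX]; exact b.repr_self _
  have hrY : ∀ i, b.repr (Y i) = Finsupp.single (Sum.inr i) 1 := fun i => by
    rw [hY]; exact b.repr_self _
  -- bracket tables
  have LXY : ∀ i j : Fin (p+1), ⁅X i, Y j⁆ =
      if j.val = 0 then
        (if h2 : 2 ≤ i.val then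
          -(X ⟨i.val - 1, lt_of_le_of_lt (Nat.sub_le _ _) i.isLt⟩) else 0)
      else if i.val = j.val + 1 then X 0 else 0 := by
    intro i j
    by_cases hj : j.val = 0
    · have hj0 : j = 0 := Fin.ext (by simpa using hj)
      subst hj0
      rw [if_pos hj]
      by_cases hi : 2 ≤ i.val
      · rw [dif_pos hi]
        have h := h1 i.val hi (by have := i.isLt; omega)
        rw [Fin.eta] at h
        rw [← lie_skew, h]
      · rw [dif_neg hi]
        have hiv : i.val = 0 ∨ i.val = 1 := by omega
        rcases hiv with h0 | h0
        · have hi0 : i = 0 := Fin.ext (by simpa using h0)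
          rw [hi0, ← lie_skew, h5, neg_zero]
        · have hi1 : i = 1 := Fin.ext (by rw [h0, hv1])
          rw [hi1, ← lie_skew, h6, neg_zero]
    · rw [if_neg hj]
      by_cases hij : i.val = j.val + 1
      · rw [if_pos hij]
        have hjp : j.val + 1 ≤ p := by have := i.isLt; omega
        have h := h3 j.val (by omega) hjp
        have e1 : (⟨j.val + 1, by omega⟩ : Fin (p+1)) = i := Fin.ext (by simp [hij])
        have e2 : (⟨j.val, by omega⟩ : Fin (p+1)) = j := Fin.eta _ _
        rw [e1, e2] at h; exact h
      · rw [if_neg hij]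
        exact h9 i j (fun h0 => hj (by simp [h0])) hij
  have LYX : ∀ i j : Fin (p+1), ⁅Y i, X j⁆ =
      if i.val = 0 then
        (if h2 : 2 ≤ j.val then
          X ⟨j.val - 1, lt_of_le_of_lt (Nat.sub_le _ _) j.isLt⟩ else 0)
      else if j.val = i.val + 1 then -(X 0) else 0 := by
    intro i j
    rw [← lie_skew, LXY j i]
    split_ifs <;> simp
  have LYY : ∀ i j : Fin (p+1), ⁅Y i, Y j⁆ =
      if h : i.val = 0 ∧ 1 ≤ j.val ∧ j.val + 1 ≤ p then -(Y ⟨j.val + 1, by omega⟩)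
      else if h' : j.val = 0 ∧ 1 ≤ i.val ∧ i.val + 1 ≤ p then Y ⟨i.val + 1, by omega⟩
      else 0 := by
    intro i j
    by_cases hi : i.val = 0
    · have hi0 : i = 0 := Fin.ext (by simpa using hi)
      subst hi0
      by_cases hj1 : 1 ≤ j.val ∧ j.val + 1 ≤ p
      · rw [dif_pos ⟨hi, hj1.1, hj1.2⟩]
        have h := h2 j.val hj1.1 hj1.2
        rw [Fin.eta] at h; exact h
      · rw [dif_neg (by tauto), dif_neg (by rintro ⟨-, h, -⟩; omega)]
        rcases Nat.eq_zero_or_pos j.val with h0 | h0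
        · have : j = 0 := Fin.ext (by simpa using h0)
          rw [this, lie_self]
        · have hjp : j.val = p := by have := j.isLt; omega
          have : j = ⟨p, by omega⟩ := Fin.ext (by simpa using hjp)
          rw [this]; exact h7
    · rw [dif_neg (fun h => hi h.1)]
      by_cases hj : j.val = 0
      · have hj0 : j = 0 := Fin.ext (by simpa using hj)
        subst hj0
        by_cases hip : i.val + 1 ≤ p
        · rw [dif_pos ⟨hj, by omega, hip⟩]
          have h := h2 i.val (by omega) hip
          rw [Fin.eta] at h
          rw [← lie_skew, h, neg_neg]
        · rw [dif_neg (by rintro ⟨-, -, h⟩; omega)]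
          have hik : i = ⟨p, by omega⟩ := Fin.ext (by simp; have := i.isLt; omega)
          rw [hik, ← lie_skew, h7, neg_zero]
      · rw [dif_neg (by rintro ⟨h, -⟩; exact hj h)]
        exact h8 i j (fun h0 => hi (by simp [h0])) (fun h0 => hj (by simp [h0]))
  -- symmetry of B
  have hBsymm : ∀ x y : g, B x y = B y x := by
    have : B = B.flip := by
      apply b.ext; intro k; apply b.ext; intro l
      rcases k with i | i <;> rcases l with j | j <;>
        simp only [LinearMap.flip_apply, ← hX, ← hY, hB1, hB2, hB3, hB4] <;>
        simp [eq_comm]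
    intro x y
    have h := LinearMap.congr_fun (LinearMap.congr_fun this x) y
    simpa using h
  -- antisymmetry of ω
  have hwanti : ∀ x y : g, ω x y = -(ω y x) := by
    have : ω = -ω.flip := by
      apply b.ext; intro k; apply b.ext; intro l
      rcases k with i | i <;> rcases l with j | j <;>
        simp only [LinearMap.neg_apply, LinearMap.flip_apply, ← hX, ← hY,
          hw1, hw2, hw3, hw4] <;> simp [eq_comm] <;>
        · rcases eq_or_ne i j with rfl | hij
          · simp
          · simp [hij, Ne.symm hij]
    intro x y
    have h := LinearMap.congr_fun (LinearMap.congr_fun this x) y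
    simpa using h
  -- invariance of B
  have hBinv : ∀ x y z : g, B ⁅x, y⁆ z = B x ⁅y, z⁆ := by
    have hT : triB B = 0 := by
      apply b.ext; intro k; apply b.ext; intro l; apply b.ext; intro m
      rcases k with i | i <;> rcases l with j | j <;> rcases m with m | m <;>
        simp only [triB_apply, LinearMap.zero_apply, ← hX, ← hY, h4, LXY, LYX, LYY] <;>
        (try split_ifs) <;>
        (try simp only [map_neg, map_zero, neg_neg, LinearMap.neg_apply,
          LinearMap.zero_apply, hB1, hB2, hB3, hB4, sub_self, sub_zero, zero_sub,
          neg_zero, neg_eq_zero]) <;>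
        (try rfl) <;>
        (try simp only [Fin.ext_iff, Fin.val_zero, Fin.val_mk, hv1]) <;>
        (try split_ifs) <;>
        (first | rfl | ring1 | omega | (exfalso; omega))
    intro x y z
    have h := LinearMap.congr_fun (LinearMap.congr_fun (LinearMap.congr_fun hT x) y) z
    simp only [triB_apply, LinearMap.zero_apply] at h
    linear_combination h

  -- cocycle
  have hwcocycle : ∀ x y z : g, ω ⁅x, y⁆ z + ω ⁅y, z⁆ x + ω ⁅z, x⁆ y = 0 := by
    have hT : triW ω = 0 := by
      apply b.ext; intro k; apply b.ext; intro l; apply b.ext; intro m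
      rcases k with i | i <;> rcases l with j | j <;> rcases m with m | m <;>
        simp only [triW_apply, LinearMap.zero_apply, ← hX, ← hY, h4, LXY, LYX, LYY] <;>
        (try split_ifs) <;>
        (try simp only [map_neg, map_zero, neg_neg, LinearMap.neg_apply,
          LinearMap.zero_apply, hw1, hw2, hw3, hw4, add_zero, zero_add, neg_zero]) <;>
        (try rfl) <;>
        (try simp only [Fin.ext_iff, Fin.val_zero, Fin.val_mk, hv1]) <;>
        (try split_ifs) <;>
        (try clear LXY LYX LYY) <;> (try clear h1 h2 h3 h4 h5 h6 h7 h8 h9) <;>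
        (try clear hrX hrY hX hY) <;> (try clear hw1 hw2 hw3 hw4 hB1 hB2 hB3 hB4) <;>
        (try clear hBsymm hBinv hwanti) <;> (try clear ω B b) <;>
        (first | rfl | ring1 | omega | (exfalso; omega) | contradiction | (rw [show ((i:ℕ) - 1 : ℕ) = (m:ℕ) from by omega]; push_cast; ring1) | (rw [show ((i:ℕ) - 1 : ℕ) = (j:ℕ) from by omega]; push_cast; ring1) | (rw [show ((j:ℕ) - 1 : ℕ) = (m:ℕ) from by omega]; push_cast; ring1) | (rw [show ((j:ℕ) - 1 : ℕ) = (i:ℕ) from by omega]; push_cast; ring1) | (rw [show ((m:ℕ) - 1 : ℕ) = (i:ℕ) from by omega]; push_cast; ring1) | (rw [show ((m:ℕ) - 1 : ℕ) = (j:ℕ) from by omega]; push_cast; ring1))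
    intro x y z
    have h := LinearMap.congr_fun (LinearMap.congr_fun (LinearMap.congr_fun hT x) y) z
    simpa using h
  -- nondegeneracy of B
  have hBnd : ∀ x : g, (∀ y, B x y = 0) → x = 0 := by
    have key1 : ∀ (j : Fin (p+1)) (x : g), B x (Y j) = b.repr x (Sum.inl j) := by
      intro j
      have heq : B.flip (Y j) =
          (Finsupp.lapply (Sum.inl j) : ((Fin (p+1) ⊕ Fin (p+1)) →₀ ℂ) →ₗ[ℂ] ℂ) ∘ₗ
            (b.repr : g →ₗ[ℂ] _) := by
        apply b.ext; intro k
        rcases k with i | i <;>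
          simp [LinearMap.flip_apply, ← hX, ← hY, hB3, hB2, hrX, hrY,
            Finsupp.single_apply, eq_comm]
      intro x
      simpa using LinearMap.congr_fun heq x
    have key2 : ∀ (j : Fin (p+1)) (x : g), B x (X j) = b.repr x (Sum.inr j) := by
      intro j
      have heq : B.flip (X j) =
          (Finsupp.lapply (Sum.inr j) : ((Fin (p+1) ⊕ Fin (p+1)) →₀ ℂ) →ₗ[ℂ] ℂ) ∘ₗ
            (b.repr : g →ₗ[ℂ] _) := by
        apply b.ext; intro k
        rcases k with i | i <;>
          simp [LinearMap.flip_apply, ← hX, ← hY, hB1, hB4, hrX, hrY,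
            Finsupp.single_apply, eq_comm]
      intro x
      simpa using LinearMap.congr_fun heq x
    intro x hx
    apply b.ext_elem; intro k
    rcases k with j | j
    · simp [← key1 j x, hx]
    · simp [← key2 j x, hx]
  -- nondegeneracy of ω
  have hwnd : ∀ x : g, (∀ y, ω x y = 0) → x = 0 := by
    have key1 : ∀ (j : Fin (p+1)) (x : g),
        ω x (Y j) = (if j = 0 then 1 else (j.val : ℂ)) * b.repr x (Sum.inl j) := by
      intro j
      have heq : ω.flip (Y j) =
          (if j = 0 then 1 else (j.val : ℂ)) •
            ((Finsupp.lapply (Sum.inl j) : ((Fin (p+1) ⊕ Fin (p+1)) →₀ ℂ) →ₗ[ℂ] ℂ) ∘ₗ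
              (b.repr : g →ₗ[ℂ] _)) := by
        apply b.ext; intro k
        rcases k with i | i
        · rcases eq_or_ne i j with rfl | hij
          · simp only [LinearMap.flip_apply, ← hX, hw3, if_pos rfl, LinearMap.smul_apply,
              LinearMap.coe_comp, LinearEquiv.coe_coe, Function.comp_apply, hrX,
              Finsupp.lapply_apply, Finsupp.single_eq_same, smul_eq_mul, mul_one]
            simp
          · simp only [LinearMap.flip_apply, ← hX, hw3, if_neg hij, LinearMap.smul_apply,
              LinearMap.coe_comp, LinearEquiv.coe_coe, Function.comp_apply, hrX,
              Finsupp.lapply_apply, smul_eq_mul]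
            simp [Finsupp.single_apply, hij]
        · simp only [LinearMap.flip_apply, ← hY, hw2, LinearMap.smul_apply,
            LinearMap.coe_comp, LinearEquiv.coe_coe, Function.comp_apply, hrY,
            Finsupp.lapply_apply, smul_eq_mul]
          simp [Finsupp.single_apply]
      intro x
      have h := LinearMap.congr_fun heq x
      simp only [LinearMap.flip_apply] at h
      rw [h]; split_ifs <;> simp
    have key2 : ∀ (j : Fin (p+1)) (x : g),
        ω x (X j) = -((if j = 0 then 1 else (j.val : ℂ)) * b.repr x (Sum.inr j)) := by
      intro j
      have heq : ω.flip (X j) =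
          -((if j = 0 then 1 else (j.val : ℂ)) •
            ((Finsupp.lapply (Sum.inr j) : ((Fin (p+1) ⊕ Fin (p+1)) →₀ ℂ) →ₗ[ℂ] ℂ) ∘ₗ
              (b.repr : g →ₗ[ℂ] _))) := by
        apply b.ext; intro k
        rcases k with i | i
        · simp only [LinearMap.flip_apply, ← hX, hw1, LinearMap.neg_apply,
            LinearMap.smul_apply, LinearMap.coe_comp, LinearEquiv.coe_coe,
            Function.comp_apply, hrX, Finsupp.lapply_apply, smul_eq_mul]
          simp [Finsupp.single_apply]
        · rcases eq_or_ne i j with rfl | hij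
          · simp only [LinearMap.flip_apply, ← hY, hw4, if_pos rfl, LinearMap.neg_apply,
              LinearMap.smul_apply, LinearMap.coe_comp, LinearEquiv.coe_coe,
              Function.comp_apply, hrY, Finsupp.lapply_apply, Finsupp.single_eq_same,
              smul_eq_mul, mul_one]
            simp
          · simp only [LinearMap.flip_apply, ← hY, hw4, if_neg hij, LinearMap.neg_apply,
              LinearMap.smul_apply, LinearMap.coe_comp, LinearEquiv.coe_coe,
              Function.comp_apply, hrY, Finsupp.lapply_apply, smul_eq_mul]
            simp [Finsupp.single_apply, hij]
      intro x
      have h := LinearMap.congr_fun heq x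
      simp only [LinearMap.flip_apply] at h
      rw [h]; split_ifs <;> simp
    have hc : ∀ j : Fin (p+1), (if j = 0 then 1 else (j.val : ℂ)) ≠ 0 := by
      intro j
      split_ifs with h
      · exact one_ne_zero
      · have : j.val ≠ 0 := fun hj => h (Fin.ext (by simpa using hj))
        exact Nat.cast_ne_zero.mpr this
    intro x hx
    apply b.ext_elem; intro k
    rcases k with j | j
    · have := hx (Y j); rw [key1 j x] at this
      simpa using (mul_eq_zero.mp this).resolve_left (hc j)
    · have := hx (X j); rw [key2 j x] at this
      rw [neg_eq_zero] at this
      simpa using (mul_eq_zero.mp this).resolve_left (hc j)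
  -- ω alternating
  have hwalt : ∀ x : g, ω x x = 0 := by
    intro x
    have h := hwanti x x
    linear_combination h / 2
  exact ⟨hBsymm, hBinv, hBnd, hwalt, hwnd, hwcocycle⟩
end

section
/- For every n ≥ 1, the second cohomology group of g_{2n+2} with trivial coefficients has dimension dim H²(g_{2n+2},ℂ) = n² − 1. -/
set_option linter.unusedSectionVars false
set_option maxHeartbeats 1000000

open Module

/-- The second cohomology group `H²(g, ℂ) = Z²(g, ℂ) / B²(g, ℂ)`. -/
noncomputable def secondCohomology (g : Type) [LieRing g] [LieAlgebra ℂ g] : Type :=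
  @HasQuotient.Quotient ↥(twoCocycles g) (Submodule ℂ ↥(twoCocycles g))
    (@Submodule.hasQuotient ℂ ↥(twoCocycles g) _ _ _) ((twoCoboundaries g).comap (twoCocycles g).subtype)

noncomputable instance (g : Type) [LieRing g] [LieAlgebra ℂ g] :
    AddCommGroup (secondCohomology g) :=
  Submodule.Quotient.addCommGroup _

noncomputable instance (g : Type) [LieRing g] [LieAlgebra ℂ g] :
    Module ℂ (secondCohomology g) :=
  Submodule.Quotient.module _


lemma trilin_aux {g : Type} [LieRing g] [LieAlgebra ℂ g] {ι : Type}
    (b : Basis ι ℂ g) (Ω : g →ₗ[ℂ] g →ₗ[ℂ] ℂ)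
    (h : ∀ u v w, Ω ⁅b u, b v⁆ (b w) + Ω ⁅b v, b w⁆ (b u) + Ω ⁅b w, b u⁆ (b v) = 0)
    (x y z : g) : Ω ⁅x, y⁆ z + Ω ⁅y, z⁆ x + Ω ⁅z, x⁆ y = 0 := by
  let A : g →ₗ[ℂ] g →ₗ[ℂ] g := LinearMap.mk₂ ℂ (fun x y => ⁅x, y⁆)
    add_lie smul_lie lie_add lie_smul
  let T1 : g →ₗ[ℂ] g →ₗ[ℂ] g →ₗ[ℂ] ℂ := (LinearMap.llcomp ℂ g g (g →ₗ[ℂ] ℂ) Ω) ∘ₗ A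
  let cyc : (g →ₗ[ℂ] g →ₗ[ℂ] g →ₗ[ℂ] ℂ) → g →ₗ[ℂ] g →ₗ[ℂ] g →ₗ[ℂ] ℂ :=
    fun T => (LinearMap.lflip.toLinearMap ∘ₗ T).flip
  have hcyc : ∀ (T : g →ₗ[ℂ] g →ₗ[ℂ] g →ₗ[ℂ] ℂ) (a c d : g), cyc T a c d = T c d a := by
    intro T a c d; simp [cyc]
  have hT1 : ∀ a c d : g, T1 a c d = Ω ⁅a, c⁆ d := by
    intro a c d; simp [T1, A]
  have key : T1 + cyc T1 + cyc (cyc T1) = 0 := by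
    apply b.ext; intro u
    apply b.ext; intro v
    apply b.ext; intro w
    simp only [LinearMap.add_apply, hcyc, hT1, LinearMap.zero_apply]
    exact h u v w
  have := LinearMap.congr_fun (LinearMap.congr_fun (LinearMap.congr_fun key x) y) z
  simpa only [LinearMap.add_apply, hcyc, hT1, LinearMap.zero_apply] using this

lemma bilin_aux {g : Type} [LieRing g] [LieAlgebra ℂ g] {ι : Type}
    (b : Basis ι ℂ g) (Ω Ω' : g →ₗ[ℂ] g →ₗ[ℂ] ℂ)
    (h : ∀ u v, Ω (b u) (b v) = Ω' (b u) (b v)) : Ω = Ω' := by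
  apply b.ext; intro u
  apply b.ext; intro v
  exact h u v




section main
variable (n : ℕ) (hn : 1 ≤ n)
    (g : Type) [LieRing g] [LieAlgebra ℂ g]
    (b : Basis (Fin (n+1) ⊕ Fin (n+1)) ℂ g)
    (X : Fin (n+1) → g) (Y : Fin (n+1) → g)
    (hX : ∀ i, X i = b (Sum.inl i)) (hY : ∀ i, Y i = b (Sum.inr i))
    (h1 : ∀ i : Fin (n+1), i ≠ 0 → ⁅Y 0, X i⁆ = X i)
    (h2 : ∀ i : Fin (n+1), i ≠ 0 → ⁅Y 0, Y i⁆ = -(Y i))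
    (h3 : ∀ i : Fin (n+1), i ≠ 0 → ⁅X i, Y i⁆ = X 0)
    (h4 : ∀ i j, ⁅X i, X j⁆ = 0)
    (h5 : ⁅Y 0, X 0⁆ = 0)
    (h6 : ∀ i j : Fin (n+1), i ≠ 0 → j ≠ 0 → ⁅Y i, Y j⁆ = 0)
    (h7 : ∀ i j : Fin (n+1), j ≠ 0 → i ≠ j → ⁅X i, Y j⁆ = 0)

include h1 h2 h3 h4 h5 h6 h7 in
lemma brXY : ∀ i j : Fin (n+1), ⁅X i, Y j⁆ =
    if j = 0 then (if i = 0 then 0 else -(X i)) else (if i = j then X 0 else 0) := by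
  intro i j
  by_cases hj : j = 0
  · subst hj
    by_cases hi : i = 0
    · subst hi; simp [← lie_skew (X 0) (Y 0), h5]
    · simp [hi, ← lie_skew (X i) (Y 0), h1 i hi]
  · by_cases hij : i = j
    · subst hij; simp [hj, h3 i hj]
    · simp [hj, hij, h7 i j hj hij]

include h1 h2 h3 h4 h5 h6 h7 in
lemma brYY : ∀ i j : Fin (n+1), ⁅Y i, Y j⁆ =
    if i = 0 then (if j = 0 then 0 else -(Y j)) else (if j = 0 then Y i else 0) := by
  intro i j
  by_cases hi : i = 0
  · subst hi
    by_cases hj : j = 0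
    · subst hj; simp
    · simp [hj, h2 j hj]
  · by_cases hj : j = 0
    · subst hj; simp [hi, ← lie_skew (Y i) (Y 0), h2 i hi]
    · simp [hi, hj, h6 i j hi hj]

include hX hY h1 h2 h3 h4 h5 h6 h7 in
lemma surj_aux (m : Matrix (Fin n) (Fin n) ℂ) :
    ∃ Ω : g →ₗ[ℂ] g →ₗ[ℂ] ℂ, Ω ∈ twoCocycles g ∧
      ∀ i j : Fin n, Ω (X i.succ) (Y j.succ) = m i j := by
  classical
  have hbrXY := brXY n g X Y h1 h2 h3 h4 h5 h6 h7
  have hbrYY := brYY n g X Y h1 h2 h3 h4 h5 h6 h7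
  have hbrYX : ∀ i j : Fin (n+1), ⁅Y j, X i⁆ = -⁅X i, Y j⁆ :=
    fun i j => (lie_skew (Y j) (X i)).symm
  set N : Fin (n+1) → Fin (n+1) → ℂ :=
    fun i j => Fin.cases 0 (fun i' => Fin.cases 0 (fun j' => m i' j') j) i with hNdef
  have hN0 : ∀ j, N 0 j = 0 := fun j => rfl
  have hNss : ∀ i j : Fin n, N i.succ j.succ = m i j := by intro i j; simp [hNdef]
  have hN_0 : ∀ i, N i 0 = 0 := by
    intro i
    refine Fin.cases ?_ ?_ i
    · rfl
    · intro i'; simp [hNdef]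
  set val : (Fin (n+1) ⊕ Fin (n+1)) → (Fin (n+1) ⊕ Fin (n+1)) → ℂ :=
    fun u v => Sum.elim
      (fun i => Sum.elim (fun _ => (0:ℂ)) (fun j => N i j) v)
      (fun j => Sum.elim (fun i => -(N i j)) (fun _ => (0:ℂ)) v) u with hvaldef
  set Ω : g →ₗ[ℂ] g →ₗ[ℂ] ℂ := b.constr ℂ (fun u => b.constr ℂ (fun v => val u v)) with hΩdef
  have hΩb : ∀ u v, Ω (b u) (b v) = val u v := by
    intro u v; simp [hΩdef, Basis.constr_basis]
  have hvXX : ∀ i j, Ω (X i) (X j) = 0 := by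
    intro i j; rw [hX, hX, hΩb]; simp [hvaldef]
  have hvXY : ∀ i j, Ω (X i) (Y j) = N i j := by
    intro i j; rw [hX, hY, hΩb]; simp [hvaldef]
  have hvYX : ∀ i j, Ω (Y j) (X i) = -(N i j) := by
    intro i j; rw [hX, hY, hΩb]; simp [hvaldef]
  have hvYY : ∀ i j, Ω (Y i) (Y j) = 0 := by
    intro i j; rw [hY, hY, hΩb]; simp [hvaldef]
  have hskew : Ω = -Ω.flip := by
    refine bilin_aux b _ _ ?_
    rintro (i|i) (j|j) <;>
      simp [LinearMap.neg_apply, LinearMap.flip_apply, hΩb, hvaldef]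
  have halt : ∀ x : g, Ω x x = 0 := by
    intro x
    have h' := LinearMap.congr_fun (LinearMap.congr_fun hskew x) x
    simp only [LinearMap.neg_apply, LinearMap.flip_apply] at h'
    have : Ω x x + Ω x x = 0 := by linear_combination h'
    exact add_self_eq_zero.mp this
  refine ⟨Ω, ⟨halt, ?_⟩, fun i j => by rw [hvXY, hNss]⟩
  intro x y z
  refine trilin_aux b Ω ?_ x y z
  have hb : ∀ u : Fin (n+1) ⊕ Fin (n+1), b u = Sum.elim X Y u := by
    rintro (i|i) <;> simp [hX, hY]
  clear_value Ω val N
  clear hskew halt hΩb hΩdef hvaldef hNdef hNss hX hY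
  rintro (i|i) (j|j) (k|k) <;>
    simp only [hb, Sum.elim_inl, Sum.elim_inr, hbrYX, hbrXY, hbrYY, h4, map_neg, map_zero,
      LinearMap.zero_apply, LinearMap.neg_apply] <;>
    (clear hbrXY hbrYY hbrYX h1 h2 h3 h4 h5 h6 h7 hb b m; try split_ifs) <;>
    simp_all [hvXX, hvXY, hvYX, hvYY, hN0, hN_0]

include hn hX hY h1 h2 h3 h4 h5 h6 h7 in
lemma cobound_aux (Ω : g →ₗ[ℂ] g →ₗ[ℂ] ℂ) (hmem : Ω ∈ twoCocycles g) (c : ℂ)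
    (hdiag : ∀ i j : Fin n, Ω (X i.succ) (Y j.succ) = if i = j then c else 0) :
    Ω ∈ twoCoboundaries g := by
  classical
  obtain ⟨halt, hcoc⟩ := hmem
  have hbrXY := brXY n g X Y h1 h2 h3 h4 h5 h6 h7
  have hbrYY := brYY n g X Y h1 h2 h3 h4 h5 h6 h7
  have hbrYX : ∀ i j : Fin (n+1), ⁅Y j, X i⁆ = -⁅X i, Y j⁆ :=
    fun i j => (lie_skew (Y j) (X i)).symm
  have hanti : ∀ x y : g, Ω x y + Ω y x = 0 := by
    intro x y
    have h0 := halt (x + y)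
    simp only [map_add, LinearMap.add_apply, halt x, halt y] at h0
    linear_combination h0
  set t : Fin (n+1) := ⟨1, by omega⟩ with htdef
  have ht : t ≠ 0 := by
    simp [htdef, Fin.ext_iff]
  -- d1 : Ω vanishes on pairs of X's
  have d1 : ∀ i j, Ω (X i) (X j) = 0 := by
    intro i j
    by_cases hi : i = 0 <;> by_cases hj : j = 0
    · subst hi; subst hj; exact halt _
    · have E := hcoc (X i) (X j) (Y 0)
      simp only [h4, hbrXY, hbrYX, hi, hj, if_pos, if_neg, if_true, if_false,
        map_zero, map_neg, LinearMap.zero_apply, LinearMap.neg_apply, neg_neg,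
        reduceIte] at E
      subst hi
      linear_combination E + hanti (X (0:Fin (n+1))) (X j)
    · have E := hcoc (X i) (X j) (Y 0)
      simp only [h4, hbrXY, hbrYX, hi, hj, if_pos, if_neg, if_true, if_false,
        map_zero, map_neg, LinearMap.zero_apply, LinearMap.neg_apply, neg_neg,
        reduceIte] at E
      subst hj
      linear_combination E
    · have E := hcoc (X i) (X j) (Y 0)
      simp only [h4, hbrXY, hbrYX, hi, hj, if_pos, if_neg, if_true, if_false,
        map_zero, map_neg, LinearMap.zero_apply, LinearMap.neg_apply, neg_neg,
        reduceIte] at E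
      linear_combination (E + hanti (X i) (X j)) / 2
  -- d2a : Ω (X 0) (Y j) = 0 for j ≠ 0
  have d2a : ∀ j, j ≠ 0 → Ω (X 0) (Y j) = 0 := by
    intro j hj
    have E := hcoc (X 0) (Y 0) (Y j)
    simp only [hbrXY, hbrYX, hbrYY, hj, Ne.symm hj, if_pos, if_neg, if_true, if_false,
      map_zero, map_neg, LinearMap.zero_apply, LinearMap.neg_apply, neg_neg,
      reduceIte] at E
    linear_combination E + hanti (X 0) (Y j)
  -- d2b : Ω (X 0) (Y 0) = 0
  have d2b : Ω (X 0) (Y 0) = 0 := by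
    have E := hcoc (X t) (Y 0) (Y t)
    simp only [hbrXY, hbrYX, hbrYY, ht, if_pos, if_neg, if_true, if_false,
      map_zero, map_neg, LinearMap.zero_apply, LinearMap.neg_apply, neg_neg,
      reduceIte] at E
    linear_combination -E - hanti (X t) (Y t)
  -- d3 : Ω vanishes on pairs of Y's with nonzero indices
  have d3 : ∀ j k, j ≠ 0 → k ≠ 0 → Ω (Y j) (Y k) = 0 := by
    intro j k hj hk
    have E := hcoc (Y 0) (Y j) (Y k)
    simp only [hbrYY, hj, hk, if_pos, if_neg, if_true, if_false,
      map_zero, map_neg, LinearMap.zero_apply, LinearMap.neg_apply, neg_neg,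
      reduceIte] at E
    linear_combination (hanti (Y j) (Y k) - E) / 2
  -- the linear functional
  set fv : (Fin (n+1) ⊕ Fin (n+1)) → ℂ := fun u =>
    Sum.elim (fun i => Fin.cases c (fun i' => -(Ω (X i'.succ) (Y 0))) i)
      (fun k => Fin.cases 0 (fun k' => -(Ω (Y 0) (Y k'.succ))) k) u with hfvdef
  set f : g →ₗ[ℂ] ℂ := b.constr ℂ fv with hfdef
  have hfX : ∀ i, f (X i) = Fin.cases c (fun i' => -(Ω (X i'.succ) (Y 0))) i := by
    intro i; rw [hX, hfdef, Basis.constr_basis]; simp [hfvdef]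
  have hfY : ∀ k, f (Y k) = Fin.cases 0 (fun k' => -(Ω (Y 0) (Y k'.succ))) k := by
    intro k; rw [hY, hfdef, Basis.constr_basis]; simp [hfvdef]
  have key : ∀ i j, Ω (X i) (Y j) = f ⁅X i, Y j⁆ := by
    intro i j
    rw [hbrXY]
    by_cases hj : j = 0
    · subst hj
      by_cases hi : i = 0
      · subst hi; simp [d2b]
      · obtain ⟨i', rfl⟩ := Fin.eq_succ_of_ne_zero hi
        simp [hi, hfX, Fin.cases_succ]
    · by_cases hij : i = j
      · subst hij
        obtain ⟨i', rfl⟩ := Fin.eq_succ_of_ne_zero hj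
        simp only [hj, if_neg, if_pos, reduceIte, if_true, hfX, Fin.cases_zero]
        rw [hdiag i' i']
        simp
      · simp only [hj, hij, if_neg, reduceIte, if_false, map_zero]
        by_cases hi : i = 0
        · subst hi; exact d2a j hj
        · obtain ⟨i', rfl⟩ := Fin.eq_succ_of_ne_zero hi
          obtain ⟨j', rfl⟩ := Fin.eq_succ_of_ne_zero hj
          have : i' ≠ j' := fun h => hij (by rw [h])
          rw [hdiag i' j', if_neg this]
  have keyY : ∀ i j, Ω (Y i) (Y j) = f ⁅Y i, Y j⁆ := by
    intro i j
    rw [hbrYY]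
    by_cases hi : i = 0
    · subst hi
      by_cases hj : j = 0
      · subst hj; simp [halt]
      · obtain ⟨j', rfl⟩ := Fin.eq_succ_of_ne_zero hj
        simp [hj, hfY, Fin.cases_succ]
    · by_cases hj : j = 0
      · subst hj
        obtain ⟨i', rfl⟩ := Fin.eq_succ_of_ne_zero hi
        simp only [hi, if_neg, if_pos, reduceIte, if_true, hfY, Fin.cases_succ]
        linear_combination hanti (Y i'.succ) (Y 0)
      · simp [hi, hj, d3 i j hi hj]
  have keyYX : ∀ i j, Ω (Y j) (X i) = f ⁅Y j, X i⁆ := by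
    intro i j
    rw [hbrYX, map_neg, ← key]
    linear_combination hanti (X i) (Y j)
  have hb : ∀ u : Fin (n+1) ⊕ Fin (n+1), b u = Sum.elim X Y u := by
    rintro (i|i) <;> simp [hX, hY]
  set Ξ : g →ₗ[ℂ] g →ₗ[ℂ] ℂ := LinearMap.mk₂ ℂ (fun x y => f ⁅x, y⁆)
    (fun x x' y => by show f ⁅x + x', y⁆ = f ⁅x, y⁆ + f ⁅x', y⁆; rw [add_lie, map_add])
    (fun r x y => by show f ⁅r • x, y⁆ = r • f ⁅x, y⁆; rw [smul_lie, map_smul])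
    (fun x y y' => by show f ⁅x, y + y'⁆ = f ⁅x, y⁆ + f ⁅x, y'⁆; rw [lie_add, map_add])
    (fun r x y => by show f ⁅x, r • y⁆ = r • f ⁅x, y⁆; rw [lie_smul, map_smul]) with hΞdef
  have hΩΞ : Ω = Ξ := by
    refine bilin_aux b _ _ ?_
    rintro (i|i) (j|j) <;>
      simp only [hb, Sum.elim_inl, Sum.elim_inr, hΞdef, LinearMap.mk₂_apply]
    · rw [h4, map_zero]; exact d1 i j
    · exact key i j
    · exact keyYX j i
    · exact keyY i j
  exact ⟨f, fun x y => by rw [hΩΞ]; simp [hΞdef]⟩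

end main


/-- For `n ≥ 1`, the Lie algebra `g_{2n+2}` (with basis
`{X_0, …, X_n, Y_0, …, Y_n}` and nonzero brackets `⁅Y_0, X_i⁆ = X_i`,
`⁅Y_0, Y_i⁆ = −Y_i`, `⁅X_i, Y_i⁆ = X_0` for `1 ≤ i ≤ n`) satisfies
`dim H²(g_{2n+2}, ℂ) = n² − 1`. -/
theorem dim_secondCohomology_g2n2 (n : ℕ) (hn : 1 ≤ n)
    (g : Type) [LieRing g] [LieAlgebra ℂ g]
    (b : Basis (Fin (n+1) ⊕ Fin (n+1)) ℂ g)
    (X : Fin (n+1) → g) (Y : Fin (n+1) → g)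
    (hX : ∀ i, X i = b (Sum.inl i)) (hY : ∀ i, Y i = b (Sum.inr i))
    (h1 : ∀ i : Fin (n+1), i ≠ 0 → ⁅Y 0, X i⁆ = X i)
    (h2 : ∀ i : Fin (n+1), i ≠ 0 → ⁅Y 0, Y i⁆ = -(Y i))
    (h3 : ∀ i : Fin (n+1), i ≠ 0 → ⁅X i, Y i⁆ = X 0)
    (h4 : ∀ i j, ⁅X i, X j⁆ = 0)
    (h5 : ⁅Y 0, X 0⁆ = 0)
    (h6 : ∀ i j : Fin (n+1), i ≠ 0 → j ≠ 0 → ⁅Y i, Y j⁆ = 0)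
    (h7 : ∀ i j : Fin (n+1), j ≠ 0 → i ≠ j → ⁅X i, Y j⁆ = 0) :
    finrank ℂ (secondCohomology g) = n ^ 2 - 1 := by
  classical
  set S : Submodule ℂ (Matrix (Fin n) (Fin n) ℂ) :=
    Submodule.span ℂ {(1 : Matrix (Fin n) (Fin n) ℂ)} with hSdef
  set ψ0 : ↥(twoCocycles g) →ₗ[ℂ] Matrix (Fin n) (Fin n) ℂ :=
    { toFun := fun Ω => Matrix.of (fun i j => (Ω : g →ₗ[ℂ] g →ₗ[ℂ] ℂ) (X i.succ) (Y j.succ))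
      map_add' := by intro a c; ext i j; simp
      map_smul' := by intro r a; ext i j; simp } with hψ0def
  set ψ : ↥(twoCocycles g) →ₗ[ℂ] (Matrix (Fin n) (Fin n) ℂ ⧸ S) := S.mkQ ∘ₗ ψ0 with hψdef
  have hψ0_apply : ∀ (Ω : ↥(twoCocycles g)) (i j : Fin n),
      ψ0 Ω i j = (Ω : g →ₗ[ℂ] g →ₗ[ℂ] ℂ) (X i.succ) (Y j.succ) := fun _ _ _ => rfl
  have hsurj : Function.Surjective ψ := by
    have h0 : Function.Surjective ψ0 := by
      intro m
      obtain ⟨Ω, hΩ, hm⟩ := surj_aux n g b X Y hX hY h1 h2 h3 h4 h5 h6 h7 m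
      refine ⟨⟨Ω, hΩ⟩, ?_⟩
      ext i j
      exact hm i j
    exact (Submodule.mkQ_surjective S).comp h0
  have hker : LinearMap.ker ψ = (twoCoboundaries g).comap (twoCocycles g).subtype := by
    ext Ω
    simp only [LinearMap.mem_ker, hψdef, LinearMap.comp_apply, Submodule.mkQ_apply,
      Submodule.Quotient.mk_eq_zero, Submodule.mem_comap, Submodule.subtype_apply]
    constructor
    · intro hS
      obtain ⟨cc, hcc⟩ := Submodule.mem_span_singleton.mp hS
      refine cobound_aux n hn g b X Y hX hY h1 h2 h3 h4 h5 h6 h7 (↑Ω) Ω.2 cc ?_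
      intro i j
      have h' := congr_fun (congr_fun hcc i) j
      simp only [Matrix.smul_apply, Matrix.one_apply, smul_eq_mul, mul_ite, mul_one,
        mul_zero] at h'
      simpa [hψ0_apply] using h'.symm
    · rintro ⟨f, hf⟩
      have hm : ψ0 Ω = f (X 0) • (1 : Matrix (Fin n) (Fin n) ℂ) := by
        ext i j
        rw [hψ0_apply, hf]
        by_cases hij : i = j
        · subst hij
          rw [h3 i.succ (Fin.succ_ne_zero i)]
          simp [Matrix.one_apply]
        · rw [h7 _ _ (Fin.succ_ne_zero j) (fun h => hij (Fin.succ_injective n h))]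
          simp [Matrix.one_apply, hij]
      rw [hm]
      exact Submodule.smul_mem _ _ (Submodule.mem_span_singleton_self _)
  have e1 : secondCohomology g ≃ₗ[ℂ] (Matrix (Fin n) (Fin n) ℂ ⧸ S) :=
    (Submodule.quotEquivOfEq _ _ hker.symm).trans (ψ.quotKerEquivOfSurjective hsurj)
  have e2 : finrank ℂ (secondCohomology g) = finrank ℂ (Matrix (Fin n) (Fin n) ℂ ⧸ S) :=
    LinearEquiv.finrank_eq e1
  rw [e2]
  have hone : (1 : Matrix (Fin n) (Fin n) ℂ) ≠ 0 := by
    intro h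
    have h' := congr_fun (congr_fun h ⟨0, hn⟩) ⟨0, hn⟩
    simp [Matrix.one_apply] at h'
  have hS1 : finrank ℂ S = 1 := finrank_span_singleton hone
  have hQ := Submodule.finrank_quotient_add_finrank S
  have hMM : finrank ℂ (Matrix (Fin n) (Fin n) ℂ) = n * n := by
    simp [Module.finrank_matrix]
  rw [pow_two]
  omega
end

section
/- For every n ≥ 1 and k ≥ 0: K(1,k,k,n) = 0 if 2k < n, and K(1,k,k,n) = C(n,k)² − C(n,k+1)² if 2k ≥ n, where C(n,j) denotes the binomial coefficient (0 when j > n). -/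
open Module

attribute [-instance] Sum.instBEq

/-- The basis covector `α_i` in the exterior algebra of `ℂ^{2n}`. -/
noncomputable def alphaV (n : ℕ) (i : Fin n) :
    ExteriorAlgebra ℂ ((Fin n ⊕ Fin n) → ℂ) :=
  ExteriorAlgebra.ι ℂ (Pi.single (Sum.inl i) 1)

/-- The basis covector `β_i` in the exterior algebra of `ℂ^{2n}`. -/
noncomputable def betaV (n : ℕ) (i : Fin n) :
    ExteriorAlgebra ℂ ((Fin n ⊕ Fin n) → ℂ) :=
  ExteriorAlgebra.ι ℂ (Pi.single (Sum.inr i) 1)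

/-- `Ω_n = ∑ α_i ∧ β_i`. -/
noncomputable def OmegaV (n : ℕ) : ExteriorAlgebra ℂ ((Fin n ⊕ Fin n) → ℂ) :=
  ∑ i : Fin n, alphaV n i * betaV n i

/-- The subspace `V_{k₁,k₂}` spanned by the monomials
`α_{i_1} ∧ … ∧ α_{i_{k₁}} ∧ β_{j_1} ∧ … ∧ β_{j_{k₂}}`. -/
noncomputable def Vkk (n k₁ k₂ : ℕ) :
    Submodule ℂ (ExteriorAlgebra ℂ ((Fin n ⊕ Fin n) → ℂ)) :=
  Submodule.span ℂ {x | ∃ s t : Finset (Fin n), s.card = k₁ ∧ t.card = k₂ ∧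
    x = ((s.sort (· ≤ ·)).map (alphaV n)).prod * ((t.sort (· ≤ ·)).map (betaV n)).prod}

/-- `K(m, k₁, k₂, n)`: the dimension of the kernel of
`φ^m_{k₁,k₂,n} : V_{k₁,k₂} → Λ(ℂ^{2n})`, `ω ↦ Ω_n^m ∧ ω`. -/
noncomputable def Kdim (m k₁ k₂ n : ℕ) : ℕ :=
  finrank ℂ (LinearMap.ker
    ((LinearMap.mulLeft ℂ ((OmegaV n) ^ m)).comp (Vkk n k₁ k₂).subtype))

/-- `K(m, k₁, k₂, n)` for integer arguments `k₁, k₂`, taken to be `0` when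
`k₁ < 0` or `k₂ < 0`. -/
noncomputable def KdimZ (m : ℕ) (k₁ k₂ : ℤ) (n : ℕ) : ℤ :=
  if 0 ≤ k₁ ∧ 0 ≤ k₂ then (Kdim m k₁.toNat k₂.toNat n : ℤ) else 0

namespace KP

variable {n : ℕ}

abbrev EA (n : ℕ) := ExteriorAlgebra ℂ ((Fin n ⊕ Fin n) → ℂ)

noncomputable def iu (n : ℕ) (x : Fin n ⊕ Fin n) : EA n :=
  ExteriorAlgebra.ι ℂ (Pi.single x 1)

noncomputable def P (n : ℕ) (L : List (Fin n ⊕ Fin n)) : EA n := (L.map (iu n)).prod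

@[simp] lemma P_nil : P n [] = 1 := rfl

lemma P_cons (x : Fin n ⊕ Fin n) (L : List (Fin n ⊕ Fin n)) :
    P n (x :: L) = iu n x * P n L := by simp [P]

lemma iu_anticomm (x y : Fin n ⊕ Fin n) : iu n x * iu n y = -(iu n y * iu n x) := by
  have := ExteriorAlgebra.ι_add_mul_swap (R := ℂ)
    (Pi.single x 1 : (Fin n ⊕ Fin n) → ℂ) (Pi.single y 1)
  rw [iu, iu]
  exact eq_neg_of_add_eq_zero_left this

lemma iu_sq (x : Fin n ⊕ Fin n) : iu n x * iu n x = 0 := ExteriorAlgebra.ι_sq_zero _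

/-- sign bookkeeping for permutations -/
lemma P_perm {L L' : List (Fin n ⊕ Fin n)} (h : L.Perm L') :
    ∃ c : ℂ, (c = 1 ∨ c = -1) ∧ P n L = c • P n L' := by
  induction h with
  | nil => exact ⟨1, Or.inl rfl, by simp⟩
  | cons x _ ih =>
    obtain ⟨c, hc, he⟩ := ih
    exact ⟨c, hc, by rw [P_cons, P_cons, he, mul_smul_comm]⟩
  | swap x y L =>
    refine ⟨-1, Or.inr rfl, ?_⟩
    rw [P_cons, P_cons, P_cons, P_cons, ← mul_assoc, ← mul_assoc, iu_anticomm]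
    simp
  | trans _ _ ih1 ih2 =>
    obtain ⟨c, hc, he⟩ := ih1
    obtain ⟨c', hc', he'⟩ := ih2
    refine ⟨c * c', ?_, by rw [he, he', smul_smul]⟩
    rcases hc with h | h <;> rcases hc' with h' | h' <;> simp [h, h']

lemma P_not_nodup {L : List (Fin n ⊕ Fin n)} (h : ¬ L.Nodup) : P n L = 0 := by
  classical
  induction L with
  | nil => simp at h
  | cons x t ih =>
    rw [List.nodup_cons] at h
    push_neg at h
    by_cases hx : x ∈ t
    · obtain ⟨c, _, he⟩ := P_perm (n := n) (List.perm_cons_erase hx)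
      rw [P_cons, he, mul_smul_comm, P_cons, ← mul_assoc, iu_sq, zero_mul, smul_zero]
    · rw [P_cons, ih (h hx), mul_zero]

noncomputable def Dc (n : ℕ) (x : Fin n ⊕ Fin n) : EA n →ₗ[ℂ] EA n :=
  CliffordAlgebra.contractLeft (LinearMap.proj x)

lemma Dc_iu_mul (x y : Fin n ⊕ Fin n) (w : EA n) :
    Dc n x (iu n y * w) = (if x = y then w else 0) - iu n y * Dc n x w := by
  have := CliffordAlgebra.contractLeft_ι_mul (Q := (0 : QuadraticForm ℂ ((Fin n ⊕ Fin n) → ℂ)))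
    (d := LinearMap.proj x) (Pi.single y (1:ℂ)) w
  simpa [Dc, iu, Pi.single_apply] using this

@[simp] lemma Dc_one (x : Fin n ⊕ Fin n) : Dc n x (1 : EA n) = 0 :=
  CliffordAlgebra.contractLeft_one _ _

lemma Dc_P_not_mem {x : Fin n ⊕ Fin n} {L : List (Fin n ⊕ Fin n)} (h : x ∉ L) :
    Dc n x (P n L) = 0 := by
  induction L with
  | nil => simp
  | cons y t ih =>
    simp only [List.mem_cons, not_or] at h
    rw [P_cons, Dc_iu_mul, if_neg (fun hh => h.1 hh), ih h.2, mul_zero, sub_zero]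

lemma Dc_P_mem {x : Fin n ⊕ Fin n} {L : List (Fin n ⊕ Fin n)} (hnd : L.Nodup) (h : x ∈ L) :
    ∃ c : ℂ, (c = 1 ∨ c = -1) ∧ Dc n x (P n L) = c • P n (L.erase x) := by
  induction L with
  | nil => simp at h
  | cons y t ih =>
    rw [List.nodup_cons] at hnd
    by_cases hxy : y = x
    · subst hxy
      refine ⟨1, Or.inl rfl, ?_⟩
      rw [P_cons, Dc_iu_mul, if_pos rfl, Dc_P_not_mem hnd.1, mul_zero, sub_zero, one_smul]
      congr 1
      rw [List.erase_cons_head]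
    · have hxt : x ∈ t := by
        rcases List.mem_cons.mp h with h1 | h1
        · exact absurd h1.symm hxy
        · exact h1
      obtain ⟨c, hc, he⟩ := ih hnd.2 hxt
      refine ⟨-c, by rcases hc with h1 | h1 <;> simp [h1], ?_⟩
      have herase : (y :: t).erase x = y :: (t.erase x) := by
        rw [List.erase_cons_tail (by simpa using hxy)]
      rw [P_cons, Dc_iu_mul, if_neg (fun hh => hxy hh.symm), he, zero_sub, herase, P_cons,
        mul_smul_comm, neg_smul]


noncomputable def iterD (n : ℕ) : List (Fin n ⊕ Fin n) → (EA n →ₗ[ℂ] EA n)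
  | [] => LinearMap.id
  | x :: K => (iterD n K).comp (Dc n x)

lemma toFinset_erase' {α : Type*} [DecidableEq α] {l : List α} (x : α) (h : l.Nodup) :
    (l.erase x).toFinset = l.toFinset.erase x := by
  ext a
  simp [h.mem_erase_iff, Finset.mem_erase]

lemma iterD_scalar (K : List (Fin n ⊕ Fin n)) (hK : K.Nodup) :
    ∀ L : List (Fin n ⊕ Fin n), L.Nodup →
    ∃ c : ℂ, (c = 1 ∨ c = -1) ∧
      ExteriorAlgebra.algebraMapInv (iterD n K (P n L)) =
        if K.toFinset = L.toFinset then c else 0 := by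
  induction K with
  | nil =>
    intro L hL
    refine ⟨1, Or.inl rfl, ?_⟩
    cases L with
    | nil => simp [iterD]
    | cons y t =>
      rw [if_neg, iterD]
      · simp [P_cons, map_mul, iu, ExteriorAlgebra.algebraMapInv]
      · intro hset
        have : y ∈ ([] : List (Fin n ⊕ Fin n)).toFinset := by
          rw [hset]; simp
        simp at this
  | cons x K' ih =>
    intro L hL
    rw [List.nodup_cons] at hK
    by_cases hx : x ∈ L
    · obtain ⟨c, hc, he⟩ := Dc_P_mem hL hx
      obtain ⟨c', hc', he'⟩ := ih hK.2 (L.erase x) (hL.erase x)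
      refine ⟨c' * c, by rcases hc with h|h <;> rcases hc' with h'|h' <;> simp [h, h'], ?_⟩
      rw [iterD, LinearMap.comp_apply, he, map_smul, map_smul, he', toFinset_erase' x hL]
      by_cases hset : K'.toFinset = L.toFinset.erase x
      · rw [if_pos hset, if_pos (show (x :: K').toFinset = L.toFinset by
          rw [List.toFinset_cons, hset, Finset.insert_erase (List.mem_toFinset.mpr hx)]),
          smul_eq_mul]
        ring
      · rw [if_neg hset, if_neg, smul_zero]
        intro hraw
        apply hset
        have : ((x :: K').toFinset).erase x = L.toFinset.erase x := by rw [hraw]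
        rwa [List.toFinset_cons, Finset.erase_insert (by simpa using hK.1)] at this
    · refine ⟨1, Or.inl rfl, ?_⟩
      rw [iterD, LinearMap.comp_apply, Dc_P_not_mem hx, map_zero, map_zero, if_neg]
      intro hset
      exact hx (by simpa using (hset ▸ (by simp : x ∈ (x :: K').toFinset) : x ∈ L.toFinset))

noncomputable def Lst (n : ℕ) (p : Finset (Fin n) × Finset (Fin n)) : List (Fin n ⊕ Fin n) :=
  ((p.1.sort (· ≤ ·)).map Sum.inl) ++ ((p.2.sort (· ≤ ·)).map Sum.inr)

noncomputable def Mon (n : ℕ) (p : Finset (Fin n) × Finset (Fin n)) : EA n := P n (Lst n p)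

lemma mem_Lst_inl {p : Finset (Fin n) × Finset (Fin n)} {i : Fin n} :
    Sum.inl i ∈ Lst n p ↔ i ∈ p.1 := by
  simp [Lst]

lemma mem_Lst_inr {p : Finset (Fin n) × Finset (Fin n)} {i : Fin n} :
    Sum.inr i ∈ Lst n p ↔ i ∈ p.2 := by
  simp [Lst]

lemma Lst_nodup (p : Finset (Fin n) × Finset (Fin n)) : (Lst n p).Nodup := by
  refine List.Nodup.append ?_ ?_ ?_
  · exact (Finset.sort_nodup _ _).map Sum.inl_injective
  · exact (Finset.sort_nodup _ _).map Sum.inr_injective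
  · intro a ha hb
    rcases List.mem_map.mp ha with ⟨i, _, rfl⟩
    rcases List.mem_map.mp hb with ⟨j, _, h⟩
    exact absurd h (by simp)

lemma Lst_toFinset_inj {p q : Finset (Fin n) × Finset (Fin n)}
    (h : (Lst n p).toFinset = (Lst n q).toFinset) : p = q := by
  have h1 : p.1 = q.1 := by
    ext i
    rw [← mem_Lst_inl (n := n) (p := p), ← mem_Lst_inl (n := n) (p := q),
      ← List.mem_toFinset, ← List.mem_toFinset, h]
  have h2 : p.2 = q.2 := by
    ext i
    rw [← mem_Lst_inr (n := n) (p := p), ← mem_Lst_inr (n := n) (p := q),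
      ← List.mem_toFinset, ← List.mem_toFinset, h]
  exact Prod.ext h1 h2

lemma Mon_li : LinearIndependent ℂ (Mon n) := by
  rw [Fintype.linearIndependent_iff]
  intro g hg p₀
  obtain ⟨c, hc, hT⟩ := iterD_scalar (Lst n p₀) (Lst_nodup p₀) (Lst n p₀) (Lst_nodup p₀)
  rw [if_pos rfl] at hT
  have hgz := congrArg (fun z => ExteriorAlgebra.algebraMapInv (iterD n (Lst n p₀) z)) hg
  simp only [map_sum, map_smul, map_zero] at hgz
  rw [Finset.sum_eq_single p₀] at hgz
  · rw [smul_eq_mul] at hgz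
    rw [Mon] at hgz
    rw [hT] at hgz
    rcases hc with h|h <;> [skip; skip] <;> rw [h] at hgz <;> simpa using hgz
  · intro p _ hp
    obtain ⟨c', _, hT'⟩ := iterD_scalar (Lst n p₀) (Lst_nodup p₀) (Lst n p) (Lst_nodup p)
    rw [Mon, hT', if_neg (fun hset => hp (Lst_toFinset_inj hset.symm)), smul_zero]
  · intro h
    exact absurd (Finset.mem_univ p₀) h
noncomputable def om (n : ℕ) (i : Fin n) : EA n := iu n (Sum.inl i) * iu n (Sum.inr i)

lemma Mon_eq (p : Finset (Fin n) × Finset (Fin n)) :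
    Mon n p = ((p.1.sort (· ≤ ·)).map (alphaV n)).prod *
      ((p.2.sort (· ≤ ·)).map (betaV n)).prod := by
  rw [Mon, P, Lst, List.map_append, List.prod_append, List.map_map, List.map_map]
  rfl

lemma OmegaV_eq : OmegaV n = ∑ i, om n i := rfl

lemma om_mul_Mon_of_mem {p : Finset (Fin n) × Finset (Fin n)} {i : Fin n}
    (h : i ∈ p.1 ∨ i ∈ p.2) : om n i * Mon n p = 0 := by
  have heq : om n i * Mon n p = P n (Sum.inl i :: Sum.inr i :: Lst n p) := by
    rw [P_cons, P_cons, om, mul_assoc, Mon]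
  rw [heq, P_not_nodup]
  intro hnd
  rw [List.nodup_cons, List.nodup_cons] at hnd
  rcases h with h | h
  · exact hnd.1 (List.mem_cons_of_mem _ (mem_Lst_inl.mpr h))
  · exact hnd.2.1 (mem_Lst_inr.mpr h)

lemma comm2 (x c d : Fin n ⊕ Fin n) : iu n x * (iu n c * iu n d) = (iu n c * iu n d) * iu n x := by
  rw [← mul_assoc, iu_anticomm x c, neg_mul, mul_assoc, iu_anticomm x d, mul_neg, neg_neg,
    ← mul_assoc]

lemma om_om_comm (i j : Fin n) : om n i * om n j = om n j * om n i := by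
  rw [om, om, mul_assoc, comm2, ← mul_assoc, comm2 (Sum.inl i), mul_assoc]

lemma sgn_exists {p : Finset (Fin n) × Finset (Fin n)} {i : Fin n}
    (h1 : i ∉ p.1) (h2 : i ∉ p.2) :
    ∃ c : ℂ, (c = 1 ∨ c = -1) ∧
      om n i * Mon n p = c • Mon n (insert i p.1, insert i p.2) := by
  classical
  have pa : List.Perm (α := Fin n ⊕ Fin n) ((insert i p.1).sort (· ≤ ·) |>.map Sum.inl)
      (Sum.inl i :: ((p.1.sort (· ≤ ·)).map Sum.inl)) := by
    refine ((Finset.sort_perm_toList _ _).map _).trans ?_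
    refine ((Finset.toList_insert h1).map _).trans ?_
    exact List.Perm.cons _ ((Finset.sort_perm_toList _ _).map _).symm
  have pb : List.Perm (α := Fin n ⊕ Fin n) ((insert i p.2).sort (· ≤ ·) |>.map Sum.inr)
      (Sum.inr i :: ((p.2.sort (· ≤ ·)).map Sum.inr)) := by
    refine ((Finset.sort_perm_toList _ _).map _).trans ?_
    refine ((Finset.toList_insert h2).map _).trans ?_
    exact List.Perm.cons _ ((Finset.sort_perm_toList _ _).map _).symm
  have hperm : (Sum.inl i :: Sum.inr i :: Lst n p).Perm
      (Lst n (insert i p.1, insert i p.2)) := by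
    refine List.Perm.symm ?_
    refine (List.Perm.append pa pb).trans ?_
    show (Sum.inl i :: (_ ++ Sum.inr i :: _)).Perm _
    exact List.Perm.cons _ List.perm_middle
  obtain ⟨c, hc, he⟩ := P_perm (n := n) hperm
  refine ⟨c, hc, ?_⟩
  rw [om, mul_assoc, Mon, ← P_cons, ← P_cons]
  exact he

noncomputable def sgn (n : ℕ) (i : Fin n) (s t : Finset (Fin n)) : ℂ :=
  if h : i ∉ s ∧ i ∉ t then
    (sgn_exists (p := (s, t)) (n := n) h.1 h.2).choose else 1

lemma sgn_pm (i : Fin n) (s t : Finset (Fin n)) : sgn n i s t = 1 ∨ sgn n i s t = -1 := by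
  rw [sgn]
  split
  case isTrue h => exact (sgn_exists (p := (s, t)) (n := n) h.1 h.2).choose_spec.1
  case isFalse h => exact Or.inl rfl

lemma sgn_spec {i : Fin n} {s t : Finset (Fin n)} (h1 : i ∉ s) (h2 : i ∉ t) :
    om n i * Mon n (s, t) = sgn n i s t • Mon n (insert i s, insert i t) := by
  rw [sgn, dif_pos ⟨h1, h2⟩]
  exact (sgn_exists (p := (s, t)) h1 h2).choose_spec.2

lemma sgn_mul_self (i : Fin n) (s t : Finset (Fin n)) : sgn n i s t * sgn n i s t = 1 := by
  rcases sgn_pm (n := n) i s t with h | h <;> rw [h] <;> ring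

lemma sgn_conj (i : Fin n) (s t : Finset (Fin n)) :
    (starRingEnd ℂ) (sgn n i s t) = sgn n i s t := by
  rcases sgn_pm (n := n) i s t with h | h <;> rw [h] <;> simp

lemma Mon_ne_zero (p : Finset (Fin n) × Finset (Fin n)) : Mon n p ≠ 0 :=
  Mon_li.ne_zero p

lemma sgn_cross {i j : Fin n} {s t : Finset (Fin n)} (hij : i ≠ j)
    (hi1 : i ∉ s) (hi2 : i ∉ t) (hj1 : j ∉ s) (hj2 : j ∉ t) :
    sgn n j s t * sgn n i (insert j s) (insert j t) =
      sgn n i s t * sgn n j (insert i s) (insert i t) := by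
  have h1 : om n j * (om n i * Mon n (s, t)) =
      (sgn n i s t * sgn n j (insert i s) (insert i t)) •
        Mon n (insert j (insert i s), insert j (insert i t)) := by
    rw [sgn_spec hi1 hi2, mul_smul_comm,
      sgn_spec (Finset.mem_insert.not.mpr (by push_neg; exact ⟨fun h => hij h.symm, hj1⟩))
        (Finset.mem_insert.not.mpr (by push_neg; exact ⟨fun h => hij h.symm, hj2⟩)),
      smul_smul]
  have h2 : om n j * (om n i * Mon n (s, t)) =
      (sgn n j s t * sgn n i (insert j s) (insert j t)) •
        Mon n (insert j (insert i s), insert j (insert i t)) := by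
    rw [← mul_assoc, om_om_comm, mul_assoc, sgn_spec hj1 hj2, mul_smul_comm,
      sgn_spec (Finset.mem_insert.not.mpr (by push_neg; exact ⟨hij, hi1⟩))
        (Finset.mem_insert.not.mpr (by push_neg; exact ⟨hij, hi2⟩)),
      smul_smul, Finset.insert_comm i j s, Finset.insert_comm i j t]
  have := h2.symm.trans h1
  have hsub : (sgn n j s t * sgn n i (insert j s) (insert j t) -
      sgn n i s t * sgn n j (insert i s) (insert i t)) •
        Mon n (insert j (insert i s), insert j (insert i t)) = 0 := by
    rw [sub_smul, this, sub_self]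
  rcases smul_eq_zero.mp hsub with h | h
  · exact sub_eq_zero.mp h
  · exact absurd h (Mon_ne_zero _)

abbrev Idx (n : ℕ) := Finset (Fin n) × Finset (Fin n)
abbrev Hs (n : ℕ) := EuclideanSpace ℂ (Idx n)

lemma erase_insert_comm {α : Type*} [DecidableEq α] {i j : α} (hij : i ≠ j) (s : Finset α) :
    (insert j s).erase i = insert j (s.erase i) := by
  ext a
  simp only [Finset.mem_erase, Finset.mem_insert]
  constructor
  · rintro ⟨ha, h | h⟩
    · exact Or.inl h
    · exact Or.inr ⟨ha, h⟩
  · rintro (rfl | ⟨ha, h⟩)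
    · exact ⟨fun h => hij h.symm, Or.inl rfl⟩
    · exact ⟨ha, Or.inr h⟩

noncomputable def eop (n : ℕ) (i : Fin n) : Hs n →ₗ[ℂ] Hs n where
  toFun x := WithLp.toLp 2 fun (p : Idx n) => if i ∈ p.1 ∧ i ∈ p.2 then
    sgn n i (p.1.erase i) (p.2.erase i) * x (p.1.erase i, p.2.erase i) else 0
  map_add' x y := by
    ext p
    by_cases h : i ∈ p.1 ∧ i ∈ p.2 <;> simp [h] <;> ring
  map_smul' c x := by
    ext p
    by_cases h : i ∈ p.1 ∧ i ∈ p.2 <;> simp [h] <;> ring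

noncomputable def fop (n : ℕ) (i : Fin n) : Hs n →ₗ[ℂ] Hs n where
  toFun x := WithLp.toLp 2 fun (p : Idx n) => if i ∉ p.1 ∧ i ∉ p.2 then
    sgn n i p.1 p.2 * x (insert i p.1, insert i p.2) else 0
  map_add' x y := by
    ext p
    by_cases h : i ∉ p.1 ∧ i ∉ p.2 <;> simp [h] <;> ring
  map_smul' c x := by
    ext p
    by_cases h : i ∉ p.1 ∧ i ∉ p.2 <;> simp [h] <;> ring

lemma eop_apply (i : Fin n) (x : Hs n) (p : Idx n) :
    eop n i x p = if i ∈ p.1 ∧ i ∈ p.2 then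
      sgn n i (p.1.erase i) (p.2.erase i) * x (p.1.erase i, p.2.erase i) else 0 := rfl

lemma fop_apply (i : Fin n) (x : Hs n) (p : Idx n) :
    fop n i x p = if i ∉ p.1 ∧ i ∉ p.2 then
      sgn n i p.1 p.2 * x (insert i p.1, insert i p.2) else 0 := rfl

lemma fop_eop_self (i : Fin n) (x : Hs n) (p : Idx n) :
    fop n i (eop n i x) p = if i ∉ p.1 ∧ i ∉ p.2 then x p else 0 := by
  rw [fop_apply]
  by_cases h : i ∉ p.1 ∧ i ∉ p.2
  · rw [if_pos h, if_pos h, eop_apply, if_pos ⟨Finset.mem_insert_self _ _, Finset.mem_insert_self _ _⟩,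
      Finset.erase_insert h.1, Finset.erase_insert h.2, ← mul_assoc, sgn_mul_self, one_mul]
  · rw [if_neg h, if_neg h]

lemma eop_fop_self (i : Fin n) (x : Hs n) (p : Idx n) :
    eop n i (fop n i x) p = if i ∈ p.1 ∧ i ∈ p.2 then x p else 0 := by
  rw [eop_apply]
  by_cases h : i ∈ p.1 ∧ i ∈ p.2
  · rw [if_pos h, if_pos h, fop_apply,
      if_pos ⟨Finset.notMem_erase _ _, Finset.notMem_erase _ _⟩,
      Finset.insert_erase h.1, Finset.insert_erase h.2, ← mul_assoc, sgn_mul_self, one_mul]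
  · rw [if_neg h, if_neg h]

lemma fop_eop_cross {i j : Fin n} (hij : i ≠ j) (x : Hs n) (p : Idx n) :
    fop n j (eop n i x) p = eop n i (fop n j x) p := by
  rw [fop_apply j (eop n i x) p, eop_apply i (fop n j x) p]
  by_cases hj : j ∉ p.1 ∧ j ∉ p.2
  · rw [if_pos hj, eop_apply i x (insert j p.1, insert j p.2)]
    by_cases hi : i ∈ p.1 ∧ i ∈ p.2
    · have hii : i ∈ insert j p.1 ∧ i ∈ insert j p.2 :=
        ⟨Finset.mem_insert_of_mem hi.1, Finset.mem_insert_of_mem hi.2⟩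
      rw [if_pos hii, if_pos hi, fop_apply j x (p.1.erase i, p.2.erase i)]
      dsimp only
      have hji : j ∉ p.1.erase i ∧ j ∉ p.2.erase i :=
        ⟨fun h => hj.1 (Finset.mem_of_mem_erase h), fun h => hj.2 (Finset.mem_of_mem_erase h)⟩
      rw [if_pos hji]
      rw [erase_insert_comm (i := i) (j := j) hij p.1, erase_insert_comm (i := i) (j := j) hij p.2]
      have hcross := sgn_cross (n := n) hij (Finset.notMem_erase i p.1)
        (Finset.notMem_erase i p.2) (fun h => hj.1 (Finset.mem_of_mem_erase h))
        (fun h => hj.2 (Finset.mem_of_mem_erase h))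
      rw [Finset.insert_erase hi.1, Finset.insert_erase hi.2] at hcross
      have hdd := sgn_mul_self (n := n) j (p.1.erase i) (p.2.erase i)
      have haa := sgn_mul_self (n := n) j p.1 p.2
      have hb : sgn n i (insert j (p.1.erase i)) (insert j (p.2.erase i)) =
          sgn n j (p.1.erase i) (p.2.erase i) *
            (sgn n i (p.1.erase i) (p.2.erase i) * sgn n j p.1 p.2) := by
        rw [← hcross, ← mul_assoc, hdd, one_mul]
      rw [← mul_assoc, ← mul_assoc, hb]
      linear_combination (sgn n j (p.1.erase i) (p.2.erase i) *
        sgn n i (p.1.erase i) (p.2.erase i) *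
        x (insert j (p.1.erase i), insert j (p.2.erase i))) * haa
    · have hii : ¬ (i ∈ insert j p.1 ∧ i ∈ insert j p.2) := by
        intro hc
        exact hi ⟨(Finset.mem_insert.mp hc.1).resolve_left hij,
          (Finset.mem_insert.mp hc.2).resolve_left hij⟩
      dsimp only
      rw [if_neg hii, if_neg hi, mul_zero]
  · rw [if_neg hj]
    by_cases hi : i ∈ p.1 ∧ i ∈ p.2
    · rw [if_pos hi, fop_apply j x (p.1.erase i, p.2.erase i)]
      dsimp only
      have hji : ¬ (j ∉ p.1.erase i ∧ j ∉ p.2.erase i) := by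
        intro hc
        exact hj ⟨fun h => hc.1 (Finset.mem_erase.mpr ⟨fun hh => hij hh.symm, h⟩),
          fun h => hc.2 (Finset.mem_erase.mpr ⟨fun hh => hij hh.symm, h⟩)⟩
      rw [if_neg hji, mul_zero]
    · rw [if_neg hi]

noncomputable def Eop (n : ℕ) : Hs n →ₗ[ℂ] Hs n := ∑ i : Fin n, eop n i
noncomputable def Fop (n : ℕ) : Hs n →ₗ[ℂ] Hs n := ∑ i : Fin n, fop n i

noncomputable def Wsub (n k : ℕ) : Submodule ℂ (Hs n) where
  carrier := {x | ∀ p : Idx n, x p ≠ 0 → p.1.card = k ∧ p.2.card = k}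
  add_mem' := by
    intro a b ha hb p hp
    by_cases h : a p = 0
    · exact hb p (by simpa [h] using hp)
    · exact ha p h
  zero_mem' := by intro p hp; simp at hp
  smul_mem' := by
    intro c a ha p hp
    refine ha p (fun h => hp ?_)
    show c • a p = 0
    simp [h]

lemma eop_mem_Wsub {k : ℕ} {x : Hs n} (hx : x ∈ Wsub n k) (i : Fin n) :
    eop n i x ∈ Wsub n (k + 1) := by
  intro p hp
  rw [eop_apply] at hp
  by_cases h : i ∈ p.1 ∧ i ∈ p.2
  · rw [if_pos h] at hp
    have hxe : x (p.1.erase i, p.2.erase i) ≠ 0 := by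
      intro hc; rw [hc, mul_zero] at hp; exact hp rfl
    have := hx _ hxe
    dsimp only at this
    have h1 : (p.1.erase i).card = p.1.card - 1 := Finset.card_erase_of_mem h.1
    have h2 : (p.2.erase i).card = p.2.card - 1 := Finset.card_erase_of_mem h.2
    have hc1 : 1 ≤ p.1.card := Finset.card_pos.mpr ⟨i, h.1⟩
    have hc2 : 1 ≤ p.2.card := Finset.card_pos.mpr ⟨i, h.2⟩
    omega
  · rw [if_neg h] at hp; exact absurd rfl hp

lemma fop_mem_Wsub {k : ℕ} {x : Hs n} (hx : x ∈ Wsub n (k + 1)) (i : Fin n) :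
    fop n i x ∈ Wsub n k := by
  intro p hp
  rw [fop_apply] at hp
  by_cases h : i ∉ p.1 ∧ i ∉ p.2
  · rw [if_pos h] at hp
    have hxe : x (insert i p.1, insert i p.2) ≠ 0 := by
      intro hc; rw [hc, mul_zero] at hp; exact hp rfl
    have := hx _ hxe
    dsimp only at this
    have h1 : (insert i p.1).card = p.1.card + 1 := Finset.card_insert_of_notMem h.1
    have h2 : (insert i p.2).card = p.2.card + 1 := Finset.card_insert_of_notMem h.2
    omega
  · rw [if_neg h] at hp; exact absurd rfl hp

lemma Eop_mem_Wsub {k : ℕ} {x : Hs n} (hx : x ∈ Wsub n k) : Eop n x ∈ Wsub n (k + 1) := by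
  rw [Eop, LinearMap.sum_apply]
  exact Submodule.sum_mem _ (fun i _ => eop_mem_Wsub hx i)

lemma Fop_mem_Wsub {k : ℕ} {x : Hs n} (hx : x ∈ Wsub n (k + 1)) : Fop n x ∈ Wsub n k := by
  rw [Fop, LinearMap.sum_apply]
  exact Submodule.sum_mem _ (fun i _ => fop_mem_Wsub hx i)

lemma comm_apply {k : ℕ} {x : Hs n} (hx : x ∈ Wsub n k) :
    Fop n (Eop n x) - Eop n (Fop n x) = (((n : ℂ) - 2 * k)) • x := by
  ext p
  have expand : (Fop n (Eop n x) - Eop n (Fop n x)) p =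
      ∑ i : Fin n, (fop n i (eop n i x) p - eop n i (fop n i x) p) := by
    have h1 : Fop n (Eop n x) p = ∑ j : Fin n, ∑ i : Fin n, fop n j (eop n i x) p := by
      rw [Fop, LinearMap.sum_apply, WithLp.ofLp_sum, Finset.sum_apply]
      refine Finset.sum_congr rfl (fun j _ => ?_)
      rw [Eop, LinearMap.sum_apply, map_sum, WithLp.ofLp_sum, Finset.sum_apply]
    have h2 : Eop n (Fop n x) p = ∑ i : Fin n, ∑ j : Fin n, eop n i (fop n j x) p := by
      rw [Eop, LinearMap.sum_apply, WithLp.ofLp_sum, Finset.sum_apply]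
      refine Finset.sum_congr rfl (fun i _ => ?_)
      rw [Fop, LinearMap.sum_apply, map_sum, WithLp.ofLp_sum, Finset.sum_apply]
    have hsub : (Fop n (Eop n x) - Eop n (Fop n x)) p
        = Fop n (Eop n x) p - Eop n (Fop n x) p := rfl
    rw [hsub, h1, Finset.sum_comm, h2, ← Finset.sum_sub_distrib]
    refine Finset.sum_congr rfl (fun i _ => ?_)
    rw [← Finset.sum_sub_distrib]
    rw [Finset.sum_eq_single i]
    · intro j _ hji
      rw [fop_eop_cross (fun h => hji h.symm) x p, sub_self]
    · intro h; exact absurd (Finset.mem_univ i) h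
  rw [expand]
  have hsmul : (((n : ℂ) - 2 * k) • x) p = ((n : ℂ) - 2 * k) * x p := rfl
  rw [hsmul]
  simp_rw [fop_eop_self, eop_fop_self]
  by_cases hxp : x p = 0
  · rw [hxp, mul_zero]
    refine Finset.sum_eq_zero (fun i _ => ?_)
    simp
  · obtain ⟨hk1, hk2⟩ := hx p hxp
    rw [Finset.sum_sub_distrib, ← Finset.sum_filter, ← Finset.sum_filter,
      Finset.sum_const, Finset.sum_const]
    have hfilter1 : Finset.univ.filter (fun i : Fin n => i ∉ p.1 ∧ i ∉ p.2) = (p.1 ∪ p.2)ᶜ := by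
      ext a; simp [Finset.mem_union]
    have hfilter2 : Finset.univ.filter (fun i : Fin n => i ∈ p.1 ∧ i ∈ p.2) = p.1 ∩ p.2 := by
      ext a; simp [Finset.mem_inter]
    rw [hfilter1, hfilter2, Finset.card_compl]
    have hui : (p.1 ∪ p.2).card + (p.1 ∩ p.2).card = p.1.card + p.2.card :=
      Finset.card_union_add_card_inter p.1 p.2
    have hun : (p.1 ∪ p.2).card ≤ n := by
      have := Finset.card_le_univ (p.1 ∪ p.2)
      simpa using this
    rw [Fintype.card_fin, nsmul_eq_mul, nsmul_eq_mul, ← sub_mul]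
    congr 1
    have hcast : ((p.1 ∪ p.2).card : ℂ) + ((p.1 ∩ p.2).card : ℂ) = 2 * k := by
      rw [← Nat.cast_add, hui, hk1, hk2]
      push_cast; ring
    rw [Nat.cast_sub hun]
    linear_combination -hcast

lemma inner_eop_fop (i : Fin n) (x y : Hs n) :
    inner ℂ (eop n i x) y = (inner ℂ x (fop n i y) : ℂ) := by
  classical
  rw [PiLp.inner_apply, PiLp.inner_apply]
  simp_rw [RCLike.inner_apply, mul_comm _ ((starRingEnd ℂ) _)]
  have hL : ∀ p : Idx n, p ∈ Finset.univ →
      (starRingEnd ℂ) (eop n i x p) * y p ≠ 0 → (i ∈ p.1 ∧ i ∈ p.2) := by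
    intro p _ hp
    by_contra h
    rw [eop_apply, if_neg h] at hp
    simp at hp
  have hR : ∀ q : Idx n, q ∈ Finset.univ →
      (starRingEnd ℂ) (x q) * fop n i y q ≠ 0 → (i ∉ q.1 ∧ i ∉ q.2) := by
    intro q _ hq
    by_contra h
    rw [fop_apply, if_neg h, mul_zero] at hq
    exact hq rfl
  rw [← Finset.sum_filter_of_ne hL, ← Finset.sum_filter_of_ne hR]
  refine Finset.sum_nbij' (fun p => (p.1.erase i, p.2.erase i))
    (fun q => (insert i q.1, insert i q.2)) ?_ ?_ ?_ ?_ ?_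
  · intro p hp
    rw [Finset.mem_filter] at hp ⊢
    exact ⟨Finset.mem_univ _, Finset.notMem_erase _ _, Finset.notMem_erase _ _⟩
  · intro q hq
    rw [Finset.mem_filter] at hq ⊢
    exact ⟨Finset.mem_univ _, Finset.mem_insert_self _ _, Finset.mem_insert_self _ _⟩
  · intro p hp
    rw [Finset.mem_filter] at hp
    exact Prod.ext (Finset.insert_erase hp.2.1) (Finset.insert_erase hp.2.2)
  · intro q hq
    rw [Finset.mem_filter] at hq
    exact Prod.ext (Finset.erase_insert hq.2.1) (Finset.erase_insert hq.2.2)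
  · intro p hp
    rw [Finset.mem_filter] at hp
    rw [eop_apply, if_pos hp.2, fop_apply i y ((p.1.erase i, p.2.erase i))]
    dsimp only
    rw [if_pos ⟨Finset.notMem_erase _ _, Finset.notMem_erase _ _⟩,
      Finset.insert_erase hp.2.1, Finset.insert_erase hp.2.2, map_mul, sgn_conj]
    ring

lemma inner_Eop_Fop (x y : Hs n) : inner ℂ (Eop n x) y = (inner ℂ x (Fop n y) : ℂ) := by
  rw [Eop, Fop, LinearMap.sum_apply, LinearMap.sum_apply, sum_inner, inner_sum]
  exact Finset.sum_congr rfl (fun i _ => inner_eop_fop i x y)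

lemma Eop_inj {k : ℕ} (hk : 2 * k < n) {x : Hs n} (hx : x ∈ Wsub n k)
    (hE : Eop n x = 0) : x = 0 := by
  have hcomm := comm_apply hx
  rw [hE, map_zero, zero_sub, neg_eq_iff_eq_neg, ← neg_smul] at hcomm
  have h1 : inner ℂ (Eop n (Fop n x)) x = (inner ℂ (Fop n x) (Fop n x) : ℂ) :=
    inner_Eop_Fop (Fop n x) x
  rw [hcomm, inner_smul_left] at h1
  have hconj : (starRingEnd ℂ) (-((n : ℂ) - 2 * k)) = -((n : ℂ) - 2 * k) := by
    simp [map_ofNat]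
  rw [hconj] at h1
  have hreal : -((n : ℝ) - 2 * k) * ‖x‖ ^ 2 = ‖Fop n x‖ ^ 2 := by
    have h2 := congrArg (RCLike.re (K := ℂ)) h1
    rw [RCLike.mul_re, inner_self_im, inner_self_eq_norm_sq, inner_self_eq_norm_sq,
      mul_zero, sub_zero] at h2
    rw [← h2]
    congr 1
    simp
  have hkn : (0 : ℝ) < (n : ℝ) - 2 * k := by
    have : (2 * k : ℝ) < n := by exact_mod_cast hk
    linarith
  have hx0 : ‖x‖ ^ 2 ≤ 0 := by nlinarith [sq_nonneg ‖Fop n x‖]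
  have : ‖x‖ = 0 := by nlinarith [norm_nonneg x]
  exact norm_eq_zero.mp this

lemma Fop_inj {k : ℕ} (hk : n ≤ 2 * k) {y : Hs n} (hy : y ∈ Wsub n (k + 1))
    (hF : Fop n y = 0) : y = 0 := by
  have hcomm := comm_apply hy
  rw [hF, map_zero, sub_zero] at hcomm
  have h1 : inner ℂ (Fop n (Eop n y)) y = (inner ℂ (Eop n y) (Eop n y) : ℂ) := by
    calc inner ℂ (Fop n (Eop n y)) y
        = (starRingEnd ℂ) (inner ℂ y (Fop n (Eop n y))) := (inner_conj_symm _ _).symm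
      _ = (starRingEnd ℂ) (inner ℂ (Eop n y) (Eop n y)) := by
          rw [← inner_Eop_Fop]
      _ = inner ℂ (Eop n y) (Eop n y) := inner_conj_symm _ _
  rw [hcomm, inner_smul_left] at h1
  have hconj : (starRingEnd ℂ) ((n : ℂ) - 2 * ((k + 1 : ℕ) : ℂ)) = (n : ℂ) - 2 * ((k + 1 : ℕ) : ℂ) := by
    simp [map_ofNat]
  rw [hconj] at h1
  have hreal : ((n : ℝ) - 2 * ((k : ℝ) + 1)) * ‖y‖ ^ 2 = ‖Eop n y‖ ^ 2 := by
    have h2 := congrArg (RCLike.re (K := ℂ)) h1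
    rw [RCLike.mul_re, inner_self_im, inner_self_eq_norm_sq, inner_self_eq_norm_sq,
      mul_zero, sub_zero] at h2
    rw [← h2]
    congr 1
    push_cast
    simp
  have hkn : ((n : ℝ) - 2 * ((k : ℝ) + 1)) < 0 := by
    have : (n : ℝ) ≤ 2 * k := by exact_mod_cast hk
    linarith
  have hy0 : ‖y‖ ^ 2 ≤ 0 := by nlinarith [sq_nonneg ‖Eop n y‖]
  have : ‖y‖ = 0 := by nlinarith [norm_nonneg y]
  exact norm_eq_zero.mp this

noncomputable def Phi (n : ℕ) : Hs n →ₗ[ℂ] EA n where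
  toFun x := ∑ p : Idx n, x p • Mon n p
  map_add' x y := by
    rw [← Finset.sum_add_distrib]
    refine Finset.sum_congr rfl (fun p _ => ?_)
    have : (x + y) p = x p + y p := rfl
    rw [this, add_smul]
  map_smul' c x := by
    rw [RingHom.id_apply, Finset.smul_sum]
    refine Finset.sum_congr rfl (fun p _ => ?_)
    have : (c • x) p = c * x p := rfl
    rw [this, smul_smul]

lemma Phi_apply (x : Hs n) : Phi n x = ∑ p : Idx n, x p • Mon n p := rfl

lemma Phi_eq_zero_iff {x : Hs n} : Phi n x = 0 ↔ x = 0 := by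
  constructor
  · intro h
    have := Fintype.linearIndependent_iff.mp (Mon_li (n := n)) (fun p => x p) h
    ext p
    exact this p
  · rintro rfl
    rw [Phi_apply]
    refine Finset.sum_eq_zero (fun p _ => ?_)
    show (0 : ℂ) • Mon n p = 0
    rw [zero_smul]

lemma Omega_mul_Phi (x : Hs n) : OmegaV n * Phi n x = Phi n (Eop n x) := by
  classical
  rw [OmegaV_eq, Finset.sum_mul, Eop, LinearMap.sum_apply, map_sum]
  refine Finset.sum_congr rfl (fun i _ => ?_)
  rw [Phi_apply, Phi_apply, Finset.mul_sum]
  have hL : ∀ p : Idx n, p ∈ Finset.univ →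
      om n i * (x p • Mon n p) ≠ 0 → (i ∉ p.1 ∧ i ∉ p.2) := by
    intro p _ hp
    by_contra h
    have h' : i ∈ p.1 ∨ i ∈ p.2 := by tauto
    rw [mul_smul_comm, om_mul_Mon_of_mem h', smul_zero] at hp
    exact hp rfl
  have hR : ∀ q : Idx n, q ∈ Finset.univ →
      eop n i x q • Mon n q ≠ 0 → (i ∈ q.1 ∧ i ∈ q.2) := by
    intro q _ hq
    by_contra h
    rw [eop_apply, if_neg h, zero_smul] at hq
    exact hq rfl
  rw [← Finset.sum_filter_of_ne hL, ← Finset.sum_filter_of_ne hR]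
  refine Finset.sum_nbij' (fun p => (insert i p.1, insert i p.2))
    (fun q => (q.1.erase i, q.2.erase i)) ?_ ?_ ?_ ?_ ?_
  · intro p hp
    rw [Finset.mem_filter] at hp ⊢
    exact ⟨Finset.mem_univ _, Finset.mem_insert_self _ _, Finset.mem_insert_self _ _⟩
  · intro q hq
    rw [Finset.mem_filter] at hq ⊢
    exact ⟨Finset.mem_univ _, Finset.notMem_erase _ _, Finset.notMem_erase _ _⟩
  · intro p hp
    rw [Finset.mem_filter] at hp
    exact Prod.ext (Finset.erase_insert hp.2.1) (Finset.erase_insert hp.2.2)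
  · intro q hq
    rw [Finset.mem_filter] at hq
    exact Prod.ext (Finset.insert_erase hq.2.1) (Finset.insert_erase hq.2.2)
  · intro p hp
    rw [Finset.mem_filter] at hp
    have hspec := sgn_spec (n := n) hp.2.1 hp.2.2
    have hmon : Mon n (p.1, p.2) = Mon n p := by rw [Prod.mk.eta]
    rw [hmon] at hspec
    rw [mul_smul_comm, hspec, eop_apply i x (insert i p.1, insert i p.2)]
    dsimp only
    rw [if_pos ⟨Finset.mem_insert_self _ _, Finset.mem_insert_self _ _⟩,
      Finset.erase_insert hp.2.1, Finset.erase_insert hp.2.2, Prod.mk.eta,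
      smul_smul, mul_comm (x p)]

lemma Vkk_eq_map (k : ℕ) : Vkk n k k = (Wsub n k).map (Phi n) := by
  apply le_antisymm
  · rw [Vkk, Submodule.span_le]
    rintro v ⟨s, t, hs, ht, rfl⟩
    refine ⟨EuclideanSpace.single (s, t) (1 : ℂ), ?_, ?_⟩
    · intro p hp
      by_cases h : p = (s, t)
      · subst h; exact ⟨hs, ht⟩
      · rw [EuclideanSpace.single_apply, if_neg h] at hp
        exact absurd rfl hp
    · rw [Phi_apply, Finset.sum_eq_single ((s, t) : Idx n)]
      · rw [EuclideanSpace.single_apply, if_pos rfl, one_smul]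
        exact Mon_eq (s, t)
      · intro q _ hq
        rw [EuclideanSpace.single_apply, if_neg hq, zero_smul]
      · intro h; exact absurd (Finset.mem_univ _) h
  · rintro _ ⟨x, hx, rfl⟩
    rw [Phi_apply]
    refine Submodule.sum_mem _ (fun p _ => ?_)
    by_cases h : x p = 0
    · rw [h, zero_smul]; exact Submodule.zero_mem _
    · refine Submodule.smul_mem _ _ (Submodule.subset_span ?_)
      obtain ⟨h1, h2⟩ := hx p h
      exact ⟨p.1, p.2, h1, h2, Mon_eq p⟩

section Dims

variable (n k : ℕ)

noncomputable def T2 (n k : ℕ) : (Wsub n k) →ₗ[ℂ] Hs n := (Eop n).comp (Wsub n k).subtype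

noncomputable def WtoV (n k : ℕ) : (Wsub n k) →ₗ[ℂ] (Vkk n k k) :=
  ((Phi n).comp (Wsub n k).subtype).codRestrict (Vkk n k k)
    (fun x => by rw [Vkk_eq_map]; exact ⟨x.1, x.2, rfl⟩)

lemma WtoV_bij : Function.Bijective (WtoV n k) := by
  constructor
  · intro a b hab
    have : Phi n a.1 = Phi n b.1 := congrArg Subtype.val hab
    have h2 : (a.1 : Hs n) = b.1 := by
      have h0 : Phi n (a.1 - b.1) = 0 := by rw [map_sub, this, sub_self]
      have := Phi_eq_zero_iff.mp h0
      exact sub_eq_zero.mp this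
    exact Subtype.ext h2
  · rintro ⟨v, hv⟩
    rw [Vkk_eq_map] at hv
    obtain ⟨x, hx, rfl⟩ := hv
    exact ⟨⟨x, hx⟩, rfl⟩

noncomputable def WVequiv (n k : ℕ) : (Wsub n k) ≃ₗ[ℂ] (Vkk n k k) :=
  LinearEquiv.ofBijective (WtoV n k) (WtoV_bij n k)

lemma ker_transfer :
    (LinearMap.ker (T2 n k)).map (WVequiv n k).toLinearMap =
      LinearMap.ker ((LinearMap.mulLeft ℂ ((OmegaV n) ^ 1)).comp (Vkk n k k).subtype) := by
  ext y
  simp only [Submodule.mem_map, LinearMap.mem_ker, LinearMap.comp_apply]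
  constructor
  · rintro ⟨x, hx, rfl⟩
    show (OmegaV n) ^ 1 * (Phi n (x : Hs n)) = 0
    rw [pow_one, Omega_mul_Phi]
    have hEx : Eop n (x : Hs n) = 0 := hx
    rw [hEx]
    exact (Phi_eq_zero_iff (n := n)).mpr rfl
  · intro hy
    obtain ⟨x, rfl⟩ := (WtoV_bij n k).2 y
    refine ⟨x, ?_, rfl⟩
    show Eop n (x : Hs n) = 0
    have h0 : (OmegaV n) ^ 1 * (Phi n (x : Hs n)) = 0 := hy
    rw [pow_one, Omega_mul_Phi] at h0
    exact Phi_eq_zero_iff.mp h0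

lemma Kdim_eq_ker_T2 : Kdim 1 k k n = finrank ℂ (LinearMap.ker (T2 n k)) := by
  rw [Kdim, ← ker_transfer n k, LinearEquiv.finrank_map_eq]

noncomputable def WsubFunEquiv (n k : ℕ) :
    (Wsub n k) ≃ₗ[ℂ] ({p : Idx n // p.1.card = k ∧ p.2.card = k} → ℂ) where
  toFun x q := x.1 q.1
  map_add' x y := rfl
  map_smul' c x := rfl
  invFun f := ⟨WithLp.toLp 2 (fun p => if h : p.1.card = k ∧ p.2.card = k then f ⟨p, h⟩ else 0 : Idx n → ℂ),
    by
      intro p hp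
      by_cases h : p.1.card = k ∧ p.2.card = k
      · exact h
      · exact absurd (dif_neg h) hp⟩
  left_inv x := by
    apply Subtype.ext
    ext p
    by_cases h : p.1.card = k ∧ p.2.card = k
    · exact dif_pos h
    · show (if h : _ then _ else 0) = x.1 p
      rw [dif_neg h]
      by_contra hne
      exact h (x.2 p (fun hc => hne hc.symm))
  right_inv f := by
    funext q
    exact dif_pos q.2

lemma finrank_Wsub : finrank ℂ (Wsub n k) = (n.choose k) ^ 2 := by
  rw [(WsubFunEquiv n k).finrank_eq, Module.finrank_fintype_fun_eq_card]
  rw [show Fintype.card {p : Idx n // p.1.card = k ∧ p.2.card = k} =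
      Fintype.card ({s : Finset (Fin n) // s.card = k} × {s : Finset (Fin n) // s.card = k}) from
    Fintype.card_congr (Equiv.subtypeProdEquivProd
      (p := fun s : Finset (Fin n) => s.card = k) (q := fun s : Finset (Fin n) => s.card = k))]
  rw [Fintype.card_prod, Fintype.card_finset_len, Fintype.card_fin, sq]

end Dims

lemma range_T2_le (n k : ℕ) : LinearMap.range (T2 n k) ≤ Wsub n (k + 1) := by
  rintro _ ⟨x, rfl⟩
  exact Eop_mem_Wsub x.2

lemma range_T2 (n k : ℕ) (hk : n ≤ 2 * k) :
    LinearMap.range (T2 n k) = Wsub n (k + 1) := by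
  refine le_antisymm (range_T2_le n k) ?_
  intro y hy
  obtain ⟨r, hr, z, hz, hdecomp⟩ :=
    (LinearMap.range (T2 n k)).exists_add_mem_mem_orthogonal y
  have hrW : r ∈ Wsub n (k + 1) := range_T2_le n k hr
  have hzW : z ∈ Wsub n (k + 1) := by
    have hsub : z = y - r := by rw [hdecomp]; abel
    rw [hsub]
    exact Submodule.sub_mem _ hy hrW
  have hFz : Fop n z = 0 := by
    have hmem : Eop n (Fop n z) ∈ LinearMap.range (T2 n k) :=
      ⟨⟨Fop n z, Fop_mem_Wsub hzW⟩, rfl⟩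
    have h0 : inner ℂ (Eop n (Fop n z)) z = (0 : ℂ) :=
      (Submodule.mem_orthogonal _ z).mp hz _ hmem
    rw [inner_Eop_Fop] at h0
    exact inner_self_eq_zero.mp h0
  have hz0 : z = 0 := Fop_inj hk hzW hFz
  rw [hdecomp, hz0, add_zero]
  exact hr

lemma ker_T2_bot (n k : ℕ) (hk : 2 * k < n) : LinearMap.ker (T2 n k) = ⊥ := by
  rw [LinearMap.ker_eq_bot']
  intro x hx
  have hEx : Eop n (x : Hs n) = 0 := hx
  exact Subtype.ext (Eop_inj hk x.2 hEx)

lemma ker_T2_dim (n k : ℕ) (hk : n ≤ 2 * k) :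
    finrank ℂ (LinearMap.ker (T2 n k)) + (n.choose (k + 1)) ^ 2 = (n.choose k) ^ 2 := by
  have h := LinearMap.finrank_range_add_finrank_ker (T2 n k)
  rw [range_T2 n k hk, finrank_Wsub, finrank_Wsub] at h
  omega

end KP

/-- `K(1,k,k,n) = 0` if `2k < n`, and
`K(1,k,k,n) = C(n,k)² − C(n,k+1)²` if `2k ≥ n`. -/
theorem Kdim_one_diag (n : ℕ) (hn : 1 ≤ n) (k : ℕ) :
    (2 * k < n → Kdim 1 k k n = 0) ∧
    (n ≤ 2 * k →
      (Kdim 1 k k n : ℤ) = (n.choose k : ℤ) ^ 2 - (n.choose (k + 1) : ℤ) ^ 2) := by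
  constructor
  · intro hk
    rw [KP.Kdim_eq_ker_T2 n k, KP.ker_T2_bot n k hk, finrank_bot]
  · intro hk
    have h := KP.ker_T2_dim n k hk
    rw [KP.Kdim_eq_ker_T2 n k]
    have hcast := congrArg (Nat.cast : ℕ → ℤ) h
    push_cast at hcast
    linarith
end

section
/- Let {y*, x_1*,…,x_n*, y_1*,…,y_n*} be the dual basis of f* corresponding to the basis {y, x_1,…,x_n, y_1,…,y_n} of f. Then: (1) the Chevalley–Eilenberg differential ∂_k vanishes on the span of all wedge products y* ∧ ξ_1 ∧ … ∧ ξ_{k−1} with ξ_1,…,ξ_{k−1} ∈ {x_1*,…,x_n*,y_1*,…,y_n*}; (2) for j + l = k, letting W_{j,l} denote the span of the monomials x*_{i_1} ∧ … ∧ x*_{i_j} ∧ y*_{r_1} ∧ … ∧ y*_{r_l} (i_1 < … < i_j, r_1 < … < r_l), one has ∂_k(W_{j,l}) = 0 if j = l, while if j ≠ l the restriction of ∂_k to W_{j,l} is injective with image y* ∧ W_{j,l}. -/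
open Module

/-- Chevalley–Eilenberg differential with trivial coefficients. -/
noncomputable def ceDiff (g : Type) [LieRing g] [LieAlgebra ℂ g] (k : ℕ) :
    (AlternatingMap ℂ g ℂ (Fin k)) →ₗ[ℂ] ((Fin (k+1) → g) → ℂ) where
  toFun f x := ∑ i : Fin (k+1), ∑ j : Fin (k+1),
    if i < j then
      (-1 : ℂ) ^ (i.val + j.val) *
        f (fun m => if m.val = 0 then ⁅x i, x j⁆
            else x ⟨if m.val - 1 < i.val then m.val - 1
                    else if m.val < j.val then m.val
                    else m.val + 1, by have := m.isLt; split_ifs <;> omega⟩)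
    else 0
  map_add' f f' := by
    funext x
    simp only [Pi.add_apply]
    rw [← Finset.sum_add_distrib]
    refine Finset.sum_congr rfl fun i _ => ?_
    rw [← Finset.sum_add_distrib]
    refine Finset.sum_congr rfl fun j _ => ?_
    by_cases h : i < j
    · simp [h, AlternatingMap.add_apply, mul_add]
    · simp [h]
  map_smul' c f := by
    funext x
    simp only [Pi.smul_apply, smul_eq_mul, RingHom.id_apply, Finset.mul_sum]
    refine Finset.sum_congr rfl fun i _ => ?_
    refine Finset.sum_congr rfl fun j _ => ?_
    by_cases h : i < j
    · simp only [h, if_true, AlternatingMap.smul_apply, smul_eq_mul]; ring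
    · simp [h]

/-- The `k`-th Betti number of a Lie algebra. -/
noncomputable def betti (g : Type) [LieRing g] [LieAlgebra ℂ g] (k : ℕ) : ℤ :=
  (finrank ℂ (LinearMap.ker (ceDiff g k)) : ℤ) -
    (match k with
     | 0 => (0 : ℤ)
     | (j+1) => (finrank ℂ (LinearMap.range (ceDiff g j)) : ℤ))

/-- The wedge product `ξ_1 ∧ … ∧ ξ_k` of a family of covectors, as the alternating map
`(v_1, …, v_k) ↦ det (ξ_i (v_j))`. -/
noncomputable def wedgeF {g : Type} [AddCommGroup g] [Module ℂ g] {k : ℕ}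
    (ξ : Fin k → (g →ₗ[ℂ] ℂ)) : AlternatingMap ℂ g ℂ (Fin k) :=
  (Matrix.detRowAlternating : AlternatingMap ℂ (Fin k → ℂ) ℂ (Fin k)).compLinearMap
    (LinearMap.pi ξ)

lemma units_neg_one_pow_smul (p : ℕ) (x : ℂ) : ((-1:ℤˣ)^p) • x = (-1:ℂ)^p * x := by
  rw [Units.smul_def, Units.val_pow_eq_pow_val]
  simp only [Units.val_neg, Units.val_one, zsmul_eq_mul]
  push_cast
  ring

lemma succAbove_val (K : ℕ) (a : Fin (K+2)) (q : Fin (K+1)) :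
    ((a.succAbove q : Fin (K+2))).val = if q.val < a.val then q.val else q.val + 1 := by
  unfold Fin.succAbove
  split_ifs with h1 h2 h3 <;>
    simp_all [Fin.lt_def, Fin.coe_castSucc, Fin.val_succ]

lemma ceDiff_apply_eq (g : Type) [LieRing g] [LieAlgebra ℂ g]
    (ys : g →ₗ[ℂ] ℂ) (D : g →ₗ[ℂ] g)
    (hbr : ∀ u w : g, ⁅u, w⁆ = ys u • D w - ys w • D u)
    (k : ℕ) (ω : AlternatingMap ℂ g ℂ (Fin k)) (v : Fin (k+1) → g) :
    ceDiff g k ω v = -∑ i : Fin (k+1), (-1:ℂ)^(i:ℕ) * ys (v i) *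
      ∑ m : Fin k, ω (Function.update (v ∘ i.succAbove) m (D (v (i.succAbove m)))) := by
  cases k with
  | zero =>
      have h0 : ∀ i j : Fin 1, ¬ i < j := by decide
      simp [ceDiff, h0]
  | succ K =>
  -- the auxiliary function G
  set G : Fin (K+2) → Fin (K+2) → ℂ := fun a b =>
    if hab : a = b then 0 else
      (-1:ℂ)^(a:ℕ) * ys (v a) *
        ω (Function.update (v ∘ a.succAbove)
            ⟨if b.val < a.val then b.val else b.val - 1, by
              have h1 := a.isLt; have h2 := b.isLt
              have h3 : a.val ≠ b.val := fun h => hab (Fin.ext h)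
              split_ifs <;> omega⟩
            (D (v b))) with hGdef
  have hGdiag : ∀ a, G a a = 0 := fun a => by simp [hGdef]
  -- per-term identity
  have hterm : ∀ i j : Fin (K+2), i < j →
      (-1:ℂ)^(i.val + j.val) * ω (fun m : Fin (K+1) =>
          if m.val = 0 then ⁅v i, v j⁆
          else v ⟨if m.val - 1 < i.val then m.val - 1
                  else if m.val < j.val then m.val
                  else m.val + 1, by have := m.isLt; split_ifs <;> omega⟩)
      = -(G i j + G j i) := by
    intro i j hij
    have hijv : i.val < j.val := hij
    have hjpos : 1 ≤ j.val := by omega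
    have hjK : j.val ≤ K + 1 := by omega
    have hiK : i.val ≤ K := by omega
    -- base function
    set base : Fin (K+1) → g := fun m =>
      if m.val = 0 then (0:g)
      else v ⟨if m.val - 1 < i.val then m.val - 1
              else if m.val < j.val then m.val
              else m.val + 1, by have := m.isLt; split_ifs <;> omega⟩ with hbasedef
    have hupd : ∀ w : g, (fun m : Fin (K+1) =>
        if m.val = 0 then w
        else v ⟨if m.val - 1 < i.val then m.val - 1
                else if m.val < j.val then m.val
                else m.val + 1, by have := m.isLt; split_ifs <;> omega⟩)
        = Function.update base 0 w := by
      intro w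
      funext m
      by_cases hm : m = 0
      · subst hm; simp [Function.update_self]
      · have hmv : m.val ≠ 0 := fun h => hm (Fin.ext h)
        rw [Function.update_of_ne hm]
        simp only [hbasedef, if_neg hmv]
    -- the two permutation identities
    have hperm : ∀ (w : g) (a : Fin (K+2)) (p : Fin (K+1)),
        ((Function.update base 0 w) ∘ (Fin.cycleRange p) = Function.update (v ∘ a.succAbove) p w) →
        ω (Function.update base 0 w) = (-1:ℂ)^(p.val) * ω (Function.update (v ∘ a.succAbove) p w) := by
      intro w a p hcomp
      have h1 : ω (Function.update (v ∘ a.succAbove) p w)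
          = (-1:ℂ)^(p.val) * ω (Function.update base 0 w) := by
        rw [← hcomp, AlternatingMap.map_perm, Fin.sign_cycleRange, units_neg_one_pow_smul]
      rw [h1, ← mul_assoc, ← pow_add]
      rw [Even.neg_one_pow ⟨p.val, by ring⟩, one_mul]
    -- first permutation: remove i, insert D (v j) at position j-1
    have hcomp1 : ∀ w : g, (Function.update base 0 w) ∘ (Fin.cycleRange ⟨j.val - 1, by omega⟩)
        = Function.update (v ∘ i.succAbove) ⟨j.val - 1, by omega⟩ w := by
      intro w
      set p : Fin (K+1) := ⟨j.val - 1, by omega⟩ with hp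
      funext q
      rcases lt_trichotomy q p with h|h|h
      · rw [Function.comp_apply, Fin.cycleRange_of_lt h]
        have hq1 : ((q+1 : Fin (K+1))).val = q.val + 1 := by
          rw [Fin.val_add_one_of_lt]; exact lt_of_lt_of_le h (Fin.le_last p)
        have hqp : q.val < j.val - 1 := h
        have hne : (q+1 : Fin (K+1)) ≠ 0 := by
          intro hc; rw [Fin.ext_iff, hq1] at hc; simp at hc
        have hqne : q ≠ p := ne_of_lt h
        rw [Function.update_of_ne hne, Function.update_of_ne hqne]
        simp only [hbasedef, hq1]
        rw [if_neg (show ¬(q.val + 1 = 0) by omega)]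
        simp only [Function.comp_apply]
        congr 1
        apply Fin.ext
        simp only [Fin.val_mk, succAbove_val]
        split_ifs <;> omega
      · subst h
        rw [Function.comp_apply, Fin.cycleRange_self]
        simp [Function.update_self]
      · rw [Function.comp_apply, Fin.cycleRange_of_gt h]
        have hpq : j.val - 1 < q.val := h
        have hq0 : q.val ≠ 0 := by omega
        have hne : q ≠ 0 := fun hc => hq0 (by rw [hc]; rfl)
        have hqne : q ≠ p := ne_of_gt h
        rw [Function.update_of_ne hne, Function.update_of_ne hqne]
        simp only [hbasedef, if_neg hq0]
        simp only [Function.comp_apply]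
        congr 1
        apply Fin.ext
        simp only [Fin.val_mk, succAbove_val]
        split_ifs <;> omega
    -- second permutation: remove j, insert D (v i) at position i
    have hcomp2 : ∀ w : g, (Function.update base 0 w) ∘ (Fin.cycleRange ⟨i.val, by omega⟩)
        = Function.update (v ∘ j.succAbove) ⟨i.val, by omega⟩ w := by
      intro w
      set p : Fin (K+1) := ⟨i.val, by omega⟩ with hp
      funext q
      rcases lt_trichotomy q p with h|h|h
      · rw [Function.comp_apply, Fin.cycleRange_of_lt h]
        have hq1 : ((q+1 : Fin (K+1))).val = q.val + 1 := by
          rw [Fin.val_add_one_of_lt]; exact lt_of_lt_of_le h (Fin.le_last p)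
        have hqp : q.val < i.val := h
        have hne : (q+1 : Fin (K+1)) ≠ 0 := by
          intro hc; rw [Fin.ext_iff, hq1] at hc; simp at hc
        have hqne : q ≠ p := ne_of_lt h
        rw [Function.update_of_ne hne, Function.update_of_ne hqne]
        simp only [hbasedef, hq1]
        rw [if_neg (show ¬(q.val + 1 = 0) by omega)]
        simp only [Function.comp_apply]
        congr 1
        apply Fin.ext
        simp only [Fin.val_mk, succAbove_val]
        split_ifs <;> omega
      · subst h
        rw [Function.comp_apply, Fin.cycleRange_self]
        simp [Function.update_self]
      · rw [Function.comp_apply, Fin.cycleRange_of_gt h]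
        have hpq : i.val < q.val := h
        have hq0 : q.val ≠ 0 := by omega
        have hne : q ≠ 0 := fun hc => hq0 (by rw [hc]; rfl)
        have hqne : q ≠ p := ne_of_gt h
        rw [Function.update_of_ne hne, Function.update_of_ne hqne]
        simp only [hbasedef, if_neg hq0]
        simp only [Function.comp_apply]
        congr 1
        apply Fin.ext
        simp only [Fin.val_mk, succAbove_val]
        split_ifs <;> omega
    -- now compute
    rw [hupd ⁅v i, v j⁆, hbr (v i) (v j), AlternatingMap.map_update_sub,
      AlternatingMap.map_update_smul, AlternatingMap.map_update_smul,
      hperm (D (v j)) i ⟨j.val - 1, by omega⟩ (hcomp1 (D (v j))),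
      hperm (D (v i)) j ⟨i.val, by omega⟩ (hcomp2 (D (v i)))]
    -- rewrite G values
    have hGij : G i j = (-1:ℂ)^(i:ℕ) * ys (v i) *
        ω (Function.update (v ∘ i.succAbove) ⟨j.val - 1, by omega⟩ (D (v j))) := by
      rw [hGdef]
      simp only
      rw [dif_neg (Fin.ne_of_lt hij)]
      have he : (⟨if j.val < i.val then j.val else j.val - 1, by
            have h3 : i.val ≠ j.val := by omega
            split_ifs <;> omega⟩ : Fin (K+1)) = ⟨j.val - 1, by omega⟩ := by
        apply Fin.ext
        simp only [Fin.val_mk]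
        split_ifs <;> omega
      rw [he]
    have hGji : G j i = (-1:ℂ)^(j:ℕ) * ys (v j) *
        ω (Function.update (v ∘ j.succAbove) ⟨i.val, by omega⟩ (D (v i))) := by
      rw [hGdef]
      simp only
      rw [dif_neg (Fin.ne_of_gt hij)]
      have he : (⟨if i.val < j.val then i.val else i.val - 1, by
            have h3 : j.val ≠ i.val := by omega
            split_ifs <;> omega⟩ : Fin (K+1)) = ⟨i.val, by omega⟩ := by
        apply Fin.ext
        simp only [Fin.val_mk]
        split_ifs <;> omega
      rw [he]
    rw [hGij, hGji]
    -- pure algebra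
    set A := ω (Function.update (v ∘ i.succAbove) ⟨j.val - 1, by omega⟩ (D (v j))) with hA
    set B := ω (Function.update (v ∘ j.succAbove) ⟨i.val, by omega⟩ (D (v i))) with hB
    set x := (-1:ℂ)^(i.val) with hxdef
    set yy := (-1:ℂ)^(j.val - 1) with hydef
    have hx : x * x = 1 := by
      rw [hxdef, ← pow_add]; exact Even.neg_one_pow ⟨i.val, by ring⟩
    have hy : yy * yy = 1 := by
      rw [hydef, ← pow_add]; exact Even.neg_one_pow ⟨j.val - 1, by ring⟩
    have hxy : (-1:ℂ)^(i.val + j.val) = -(x * yy) := by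
      rw [hxdef, hydef, ← pow_add]
      have h5 : i.val + j.val = i.val + (j.val - 1) + 1 := by omega
      rw [h5, pow_succ]
      ring
    have hyy : (-1:ℂ)^(j.val) = -yy := by
      rw [hydef]
      have h5 : (-1:ℂ)^(j.val) = (-1:ℂ)^((j.val - 1) + 1) := by congr 1; omega
      rw [h5, pow_succ]
      ring
    rw [hxy, hyy]
    simp only [smul_eq_mul]
    linear_combination (-(ys (v i) * A * x)) * hy + (ys (v j) * B * yy) * hx
  -- assemble
  have step1 : ceDiff g (K+1) ω v
      = ∑ i : Fin (K+2), ∑ j : Fin (K+2), (if i < j then -(G i j + G j i) else 0) := by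
    simp only [ceDiff, LinearMap.coe_mk, AddHom.coe_mk]
    refine Finset.sum_congr rfl fun i _ => Finset.sum_congr rfl fun j _ => ?_
    by_cases hij : i < j
    · rw [if_pos hij, if_pos hij, hterm i j hij]
    · rw [if_neg hij, if_neg hij]
  rw [step1]
  have step2 : ∑ i : Fin (K+2), ∑ j : Fin (K+2), (if i < j then -(G i j + G j i) else 0)
      = -∑ i : Fin (K+2), ∑ j : Fin (K+2), G i j := by
    have e0 : ∀ i j : Fin (K+2), (if i < j then -(G i j + G j i) else 0)
        = -(if i < j then (G i j + G j i) else 0) := by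
      intro i j; split_ifs <;> simp
    have e1 : ∀ i j : Fin (K+2), (if i < j then G i j + G j i else 0)
        = (if i < j then G i j else 0) + (if i < j then G j i else 0) := by
      intro i j; split_ifs <;> simp
    have core2 : ∑ i : Fin (K+2), ∑ j : Fin (K+2), (if i < j then G i j + G j i else 0)
        = ∑ i : Fin (K+2), ∑ j : Fin (K+2), G i j := by
      calc ∑ i : Fin (K+2), ∑ j : Fin (K+2), (if i < j then G i j + G j i else 0)
          = (∑ i : Fin (K+2), ∑ j : Fin (K+2), if i < j then G i j else 0)
            + (∑ i : Fin (K+2), ∑ j : Fin (K+2), if i < j then G j i else 0) := by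
            simp only [e1, Finset.sum_add_distrib]
        _ = (∑ i : Fin (K+2), ∑ j : Fin (K+2), if i < j then G i j else 0)
            + (∑ i : Fin (K+2), ∑ j : Fin (K+2), if j < i then G i j else 0) := by
            congr 1
            rw [Finset.sum_comm]
        _ = ∑ i : Fin (K+2), ∑ j : Fin (K+2), G i j := by
            rw [← Finset.sum_add_distrib]
            refine Finset.sum_congr rfl fun i _ => ?_
            rw [← Finset.sum_add_distrib]
            refine Finset.sum_congr rfl fun j _ => ?_
            rcases lt_trichotomy i j with h|h|h
            · rw [if_pos h, if_neg (asymm h), add_zero]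
            · simp [h, hGdiag]
            · rw [if_neg (asymm h), if_pos h, zero_add]
    calc ∑ i : Fin (K+2), ∑ j : Fin (K+2), (if i < j then -(G i j + G j i) else 0)
        = ∑ i : Fin (K+2), ∑ j : Fin (K+2), -(if i < j then (G i j + G j i) else 0) := by
          simp only [e0]
      _ = -∑ i : Fin (K+2), ∑ j : Fin (K+2), (if i < j then (G i j + G j i) else 0) := by
          simp only [Finset.sum_neg_distrib]
      _ = -∑ i : Fin (K+2), ∑ j : Fin (K+2), G i j := by rw [core2]
  rw [step2]
  congr 1
  refine Finset.sum_congr rfl fun i _ => ?_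
  rw [Fin.sum_univ_succAbove (fun j => G i j) i, hGdiag, zero_add, Finset.mul_sum]
  refine Finset.sum_congr rfl fun m _ => ?_
  have hne : i.succAbove m ≠ i := Fin.succAbove_ne i m
  have hG : G i (i.succAbove m) = (-1:ℂ)^(i:ℕ) * ys (v i) *
      ω (Function.update (v ∘ i.succAbove) m (D (v (i.succAbove m)))) := by
    rw [hGdef]
    simp only
    rw [dif_neg (Ne.symm hne)]
    have he : (⟨if (i.succAbove m).val < i.val then (i.succAbove m).val
          else (i.succAbove m).val - 1, by
            have h3 : i.val ≠ (i.succAbove m).val := fun h => (Ne.symm hne) (Fin.ext h)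
            have h4 := (i.succAbove m).isLt
            split_ifs <;> omega⟩ : Fin (K+1)) = m := by
      apply Fin.ext
      simp only [Fin.val_mk, succAbove_val]
      split_ifs <;> omega
    rw [he]
  rw [hG]

variable {g : Type} [AddCommGroup g] [Module ℂ g]

lemma wedgeF_apply {k : ℕ} (ξ : Fin k → (g →ₗ[ℂ] ℂ)) (v : Fin k → g) :
    wedgeF ξ v = Matrix.det (Matrix.of fun p q => ξ q (v p)) := rfl

lemma wedgeF_cons_apply {k : ℕ} (η : g →ₗ[ℂ] ℂ) (ξ : Fin k → (g →ₗ[ℂ] ℂ))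
    (v : Fin (k+1) → g) :
    wedgeF (Fin.cons η ξ) v
      = ∑ i : Fin (k+1), (-1:ℂ)^(i:ℕ) * η (v i) * wedgeF ξ (v ∘ i.succAbove) := by
  rw [wedgeF_apply, Matrix.det_succ_column_zero]
  refine Finset.sum_congr rfl fun i _ => ?_
  have h1 : (Matrix.of fun p q => (Fin.cons η ξ : Fin (k+1) → (g →ₗ[ℂ] ℂ)) q (v p)) i 0
      = η (v i) := rfl
  rw [h1, wedgeF_apply]
  have h2 : ((Matrix.of fun p q => (Fin.cons η ξ : Fin (k+1) → (g →ₗ[ℂ] ℂ)) q (v p)).submatrix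
        i.succAbove Fin.succ) = Matrix.of fun p q => ξ q ((v ∘ i.succAbove) p) := by
    ext p q
    simp [Matrix.submatrix_apply, Fin.cons_succ]
  rw [h2]

lemma wedgeF_eq_zero_of_dup {k : ℕ} (ξ : Fin k → (g →ₗ[ℂ] ℂ)) {a b : Fin k}
    (hab : a ≠ b) (h : ξ a = ξ b) (v : Fin k → g) : wedgeF ξ v = 0 := by
  rw [wedgeF_apply, ← Matrix.det_transpose]
  exact Matrix.det_zero_of_row_eq hab (by ext p; simp [Matrix.transpose, h])

lemma wedgeF_eq_zero_of_row {k : ℕ} (ξ : Fin k → (g →ₗ[ℂ] ℂ)) (v : Fin k → g)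
    (m : Fin k) (h : ∀ q, ξ q (v m) = 0) : wedgeF ξ v = 0 := by
  rw [wedgeF_apply]
  exact Matrix.det_eq_zero_of_row_eq_zero m (by simp [h])

-- eigen sum lemma
lemma wedgeF_sum_update {k : ℕ} (ξ : Fin k → (g →ₗ[ℂ] ℂ)) (D : g →ₗ[ℂ] g)
    (c : Fin k → ℂ) (h : ∀ q w, ξ q (D w) = c q * ξ q w) (v : Fin k → g) :
    ∑ m : Fin k, wedgeF ξ (Function.update v m (D (v m))) = (∑ q, c q) * wedgeF ξ v := by
  simp only [wedgeF_apply, Matrix.det_apply]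
  have key : ∀ (m : Fin k) (σ : Equiv.Perm (Fin k)),
      (∏ i, Matrix.of (fun p q => ξ q (Function.update v m (D (v m)) p)) (σ i) i)
        = c (σ⁻¹ m) * ∏ i, Matrix.of (fun p q => ξ q (v p)) (σ i) i := by
    intro m σ
    have h1 : ∀ i : Fin k, (Matrix.of (fun p q => ξ q (Function.update v m (D (v m)) p))) (σ i) i
        = (if i = σ⁻¹ m then c i else 1) * (Matrix.of fun p q => ξ q (v p)) (σ i) i := by
      intro i
      by_cases hi : i = σ⁻¹ m
      · subst hi
        simp only [Matrix.of_apply, if_pos rfl]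
        rw [show σ (σ⁻¹ m) = m from Equiv.apply_symm_apply σ m, Function.update_self, h]
        simp
      · have : σ i ≠ m := fun hc => hi (by simp [← hc])
        simp [Matrix.of_apply, Function.update_of_ne this, if_neg hi]
        intro h'; exact absurd h' hi
    rw [Finset.prod_congr rfl fun i _ => h1 i, Finset.prod_mul_distrib,
      Finset.prod_ite_eq' Finset.univ (σ⁻¹ m) c]
    simp
  calc ∑ m : Fin k, ∑ σ : Equiv.Perm (Fin k), Equiv.Perm.sign σ •
        ∏ i, Matrix.of (fun p q => ξ q (Function.update v m (D (v m)) p)) (σ i) i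
      = ∑ σ : Equiv.Perm (Fin k), ∑ m : Fin k, Equiv.Perm.sign σ •
        (c (σ⁻¹ m) * ∏ i, Matrix.of (fun p q => ξ q (v p)) (σ i) i) := by
        rw [Finset.sum_comm]
        exact Finset.sum_congr rfl fun σ _ => Finset.sum_congr rfl fun m _ => by rw [key]
    _ = (∑ q, c q) * ∑ σ : Equiv.Perm (Fin k), Equiv.Perm.sign σ •
        ∏ i, Matrix.of (fun p q => ξ q (v p)) (σ i) i := by
        rw [Finset.mul_sum]
        refine Finset.sum_congr rfl fun σ _ => ?_
        rw [← Finset.smul_sum, ← Finset.sum_mul, Equiv.sum_comp σ⁻¹ c,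
          mul_smul_comm]

noncomputable def altCoe (g : Type) [AddCommGroup g] [Module ℂ g] (k : ℕ) :
    (AlternatingMap ℂ g ℂ (Fin k)) →ₗ[ℂ] ((Fin k → g) → ℂ) where
  toFun φ := ⇑φ
  map_add' _ _ := rfl
  map_smul' _ _ := rfl

lemma altCoe_injective (g : Type) [AddCommGroup g] [Module ℂ g] (k : ℕ) :
    Function.Injective (altCoe g k) := fun _ _ h => AlternatingMap.coe_injective h


lemma ceDiff_wedgeF (g : Type) [LieRing g] [LieAlgebra ℂ g]
    (ys : g →ₗ[ℂ] ℂ) (D : g →ₗ[ℂ] g)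
    (hbr : ∀ u w : g, ⁅u, w⁆ = ys u • D w - ys w • D u)
    {k : ℕ} (ξ : Fin k → (g →ₗ[ℂ] ℂ)) (c : Fin k → ℂ)
    (hc : ∀ q w, ξ q (D w) = c q * ξ q w) (v : Fin (k+1) → g) :
    ceDiff g k (wedgeF ξ) v = (-(∑ q, c q)) * wedgeF (Fin.cons ys ξ) v := by
  rw [ceDiff_apply_eq g ys D hbr k (wedgeF ξ) v, wedgeF_cons_apply, neg_mul, Finset.mul_sum]
  congr 1
  refine Finset.sum_congr rfl fun i _ => ?_
  have h := wedgeF_sum_update ξ D c hc (v ∘ i.succAbove)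
  simp only [Function.comp_apply] at h
  rw [h]
  ring


/-- Structure of the Chevalley–Eilenberg differential of the Lie
algebra `f` with basis `{y, x_1, …, x_n, y_1, …, y_n}`, brackets `⁅y, x_i⁆ = x_i`,
`⁅y, y_i⁆ = −y_i`, in terms of the dual basis `{y*, x_i*, y_i*}`:
(1) `∂` vanishes on the span of the monomials starting with `y*`;
(2) `∂` vanishes on `W_{j,l}` when `j = l`, while for `j ≠ l` it is injective on
`W_{j,l}` with image `y* ∧ W_{j,l}`. -/
theorem ceDiff_f_structure (n : ℕ) (hn : 1 ≤ n)
    (f : Type) [LieRing f] [LieAlgebra ℂ f]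
    (b : Basis (Unit ⊕ (Fin n ⊕ Fin n)) ℂ f)
    (y : f) (x : Fin n → f) (yi : Fin n → f)
    (hy : y = b (Sum.inl ())) (hx : ∀ i, x i = b (Sum.inr (Sum.inl i)))
    (hyi : ∀ i, yi i = b (Sum.inr (Sum.inr i)))
    (h1 : ∀ i, ⁅y, x i⁆ = x i)
    (h2 : ∀ i, ⁅y, yi i⁆ = -(yi i))
    (h3 : ∀ i j, ⁅x i, x j⁆ = 0)
    (h4 : ∀ i j, ⁅yi i, yi j⁆ = 0)
    (h5 : ∀ i j, ⁅x i, yi j⁆ = 0)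
    (ystar : f →ₗ[ℂ] ℂ) (xstar : Fin n → (f →ₗ[ℂ] ℂ)) (yistar : Fin n → (f →ₗ[ℂ] ℂ))
    (hys : ystar = b.coord (Sum.inl ()))
    (hxs : ∀ i, xstar i = b.coord (Sum.inr (Sum.inl i)))
    (hyis : ∀ i, yistar i = b.coord (Sum.inr (Sum.inr i))) :
    -- (1) ∂ vanishes on the span of wedge products whose first factor is y*
    (∀ k : ℕ, ∀ ω ∈ Submodule.span ℂ
        {w : AlternatingMap ℂ f ℂ (Fin (k+1)) |
          ∃ ξ : Fin k → (f →ₗ[ℂ] ℂ),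
            (∀ m, ξ m ∈ Set.range xstar ∪ Set.range yistar) ∧
            w = wedgeF (Fin.cons ystar ξ)},
      ceDiff f (k+1) ω = 0) ∧
    -- (2) behaviour on the subspaces W_{j,l}
    (∀ j l : ℕ,
      (j = l → ∀ ω ∈ Submodule.span ℂ
          {w : AlternatingMap ℂ f ℂ (Fin (j+l)) |
            ∃ (s t : Finset (Fin n)) (hs : s.card = j) (ht : t.card = l),
              w = wedgeF (Fin.append
                    (fun m => xstar (s.orderIsoOfFin hs m))
                    (fun m => yistar (t.orderIsoOfFin ht m)))},
        ceDiff f (j+l) ω = 0) ∧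
      (j ≠ l →
        Set.InjOn (ceDiff f (j+l))
          (Submodule.span ℂ
            {w : AlternatingMap ℂ f ℂ (Fin (j+l)) |
              ∃ (s t : Finset (Fin n)) (hs : s.card = j) (ht : t.card = l),
                w = wedgeF (Fin.append
                      (fun m => xstar (s.orderIsoOfFin hs m))
                      (fun m => yistar (t.orderIsoOfFin ht m)))}) ∧
        (ceDiff f (j+l)) '' (Submodule.span ℂ
            {w : AlternatingMap ℂ f ℂ (Fin (j+l)) |
              ∃ (s t : Finset (Fin n)) (hs : s.card = j) (ht : t.card = l),
                w = wedgeF (Fin.append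
                      (fun m => xstar (s.orderIsoOfFin hs m))
                      (fun m => yistar (t.orderIsoOfFin ht m)))})
          = (fun φ : AlternatingMap ℂ f ℂ (Fin (j+l+1)) => (φ : (Fin (j+l+1) → f) → ℂ)) ''
            (Submodule.span ℂ
              {w : AlternatingMap ℂ f ℂ (Fin (j+l+1)) |
                ∃ (s t : Finset (Fin n)) (hs : s.card = j) (ht : t.card = l),
                  w = wedgeF (Fin.cons ystar (Fin.append
                        (fun m => xstar (s.orderIsoOfFin hs m))
                        (fun m => yistar (t.orderIsoOfFin ht m))))}))) := by
  -- the derivation D = ad y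
  set D : f →ₗ[ℂ] f := (LieAlgebra.ad ℂ f y : Module.End ℂ f) with hD
  have hDapp : ∀ w, D w = ⁅y, w⁆ := fun w => rfl
  -- coordinate values
  have hcoord : ∀ (s t : Unit ⊕ (Fin n ⊕ Fin n)), b.coord s (b t) = if t = s then 1 else 0 := by
    intro s t
    rw [Basis.coord_apply, Basis.repr_self, Finsupp.single_apply]
  have hys_y : ystar y = 1 := by rw [hys, hy, hcoord]; simp
  have hys_b : ∀ sb : Fin n ⊕ Fin n, ystar (b (Sum.inr sb)) = 0 := by
    intro sb; rw [hys, hcoord]; simp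
  have hys_x : ∀ i, ystar (x i) = 0 := fun i => by rw [hx i]; exact hys_b _
  have hys_yi : ∀ i, ystar (yi i) = 0 := fun i => by rw [hyi i]; exact hys_b _
  have hxs_b : ∀ i (s : Unit ⊕ (Fin n ⊕ Fin n)),
      xstar i (b s) = if s = Sum.inr (Sum.inl i) then 1 else 0 := fun i s => by
    rw [hxs, hcoord]
  have hyis_b : ∀ i (s : Unit ⊕ (Fin n ⊕ Fin n)),
      yistar i (b s) = if s = Sum.inr (Sum.inr i) then 1 else 0 := fun i s => by
    rw [hyis, hcoord]
  have hxs_y : ∀ i, xstar i y = 0 := fun i => by rw [hy, hxs_b]; simp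
  have hyis_y : ∀ i, yistar i y = 0 := fun i => by rw [hy, hyis_b]; simp
  -- D on basis vectors
  have hDb1 : D (b (Sum.inl ())) = 0 := by rw [hDapp, ← hy]; exact lie_self y
  have hDb2 : ∀ i, D (b (Sum.inr (Sum.inl i))) = b (Sum.inr (Sum.inl i)) := fun i => by
    rw [hDapp, ← hx i]; exact h1 i
  have hDb3 : ∀ i, D (b (Sum.inr (Sum.inr i))) = -(b (Sum.inr (Sum.inr i))) := fun i => by
    rw [hDapp, ← hyi i]; exact h2 i
  -- eigenvector property transporter
  have heig : ∀ (ξ : f →ₗ[ℂ] ℂ) (cq : ℂ), (∀ s, ξ (D (b s)) = cq * ξ (b s)) →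
      ∀ w, ξ (D w) = cq * ξ w := by
    intro ξ cq hs w
    have hmaps : ξ ∘ₗ D = cq • ξ := by
      apply b.ext
      intro s
      simp only [LinearMap.comp_apply, LinearMap.smul_apply, smul_eq_mul]
      exact hs s
    have h := LinearMap.congr_fun hmaps w
    simpa using h
  have heig_ys : ∀ w, ystar (D w) = 0 * ystar w := by
    apply heig
    rintro (⟨⟩|i|i)
    · rw [hDb1]; simp
    · rw [hDb2, hys_b]; ring
    · rw [hDb3, map_neg, hys_b]; ring
  have heig_x : ∀ i w, xstar i (D w) = 1 * xstar i w := by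
    intro i
    apply heig
    rintro (⟨⟩|i'|i')
    · rw [hDb1, map_zero, ← hy, hxs_y]; ring
    · rw [hDb2]; ring
    · rw [hDb3, map_neg, hxs_b]; simp
  have heig_yi : ∀ i w, yistar i (D w) = (-1) * yistar i w := by
    intro i
    apply heig
    rintro (⟨⟩|i'|i')
    · rw [hDb1, map_zero, ← hy, hyis_y]; ring
    · rw [hDb2, hyis_b]; simp
    · rw [hDb3, map_neg]; ring
  -- the bracket identity
  have hbr : ∀ u w : f, ⁅u, w⁆ = ystar u • D w - ystar w • D u := by
    have hskew1 : ∀ i, ⁅x i, y⁆ = -(x i) := fun i => by rw [← lie_skew, h1]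
    have hskew2 : ∀ i, ⁅yi i, y⁆ = yi i := fun i => by rw [← lie_skew, h2]; simp
    have hskew5 : ∀ i j', ⁅yi j', x i⁆ = 0 := fun i j' => by rw [← lie_skew, h5]; simp
    have hbb : ∀ s t, ⁅b s, b t⁆ = ystar (b s) • ⁅y, b t⁆ - ystar (b t) • ⁅y, b s⁆ := by
      rintro (⟨⟩|i|i) (⟨⟩|i'|i') <;>
        simp [← hy, ← hx, ← hyi, h1, h2, h3, h4, h5, hskew1, hskew2, hskew5,
          hys_y, hys_x, hys_yi, lie_self]
    have step1 : ∀ (t) (u : f), ⁅u, b t⁆ = ystar u • ⁅y, b t⁆ - ystar (b t) • ⁅y, u⁆ := by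
      intro t u
      have hmap : (-(LieAlgebra.ad ℂ f (b t) : Module.End ℂ f))
          = (LinearMap.smulRight ystar ⁅y, b t⁆
              - ystar (b t) • (LieAlgebra.ad ℂ f y : Module.End ℂ f)) := by
        apply b.ext
        intro s
        simp only [LinearMap.neg_apply, LinearMap.sub_apply, LinearMap.smulRight_apply,
          LinearMap.smul_apply, LieAlgebra.ad_apply]
        rw [lie_skew]
        exact hbb s t
      have h := LinearMap.congr_fun hmap u
      simp only [LinearMap.neg_apply, LinearMap.sub_apply, LinearMap.smulRight_apply,
        LinearMap.smul_apply, LieAlgebra.ad_apply] at h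
      rw [← lie_skew, h]
    intro u w
    have hmap2 : (LieAlgebra.ad ℂ f u : Module.End ℂ f)
        = (ystar u • (LieAlgebra.ad ℂ f y : Module.End ℂ f)
            - LinearMap.smulRight ystar ⁅y, u⁆) := by
      apply b.ext
      intro t
      simp only [LinearMap.sub_apply, LinearMap.smulRight_apply,
        LinearMap.smul_apply, LieAlgebra.ad_apply]
      exact step1 t u
    have h := LinearMap.congr_fun hmap2 w
    simp only [LinearMap.sub_apply, LinearMap.smulRight_apply,
      LinearMap.smul_apply, LieAlgebra.ad_apply] at h
    rw [hDapp, hDapp]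
    exact h
  refine ⟨?_, ?_⟩
  · -- Part (1)
    intro k ω hω
    have hle : Submodule.span ℂ
        {w : AlternatingMap ℂ f ℂ (Fin (k+1)) |
          ∃ ξ : Fin k → (f →ₗ[ℂ] ℂ),
            (∀ m, ξ m ∈ Set.range xstar ∪ Set.range yistar) ∧
            w = wedgeF (Fin.cons ystar ξ)}
        ≤ LinearMap.ker (ceDiff f (k+1)) := by
      rw [Submodule.span_le]
      rintro w ⟨ξ, hξ, rfl⟩
      rw [SetLike.mem_coe, LinearMap.mem_ker]
      have hex : ∀ m : Fin k, ∃ cc : ℂ, ∀ w, ξ m (D w) = cc * ξ m w := by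
        intro m
        rcases hξ m with ⟨i, hi⟩ | ⟨i, hi⟩
        · exact ⟨1, by rw [← hi]; exact heig_x i⟩
        · exact ⟨-1, by rw [← hi]; exact heig_yi i⟩
      choose c hc using hex
      have hc' : ∀ (q : Fin (k+1)) (w : f),
          (Fin.cons ystar ξ : Fin (k+1) → (f →ₗ[ℂ] ℂ)) q (D w)
            = (Fin.cons 0 c : Fin (k+1) → ℂ) q * (Fin.cons ystar ξ : Fin (k+1) → (f →ₗ[ℂ] ℂ)) q w := by
        intro q w
        refine Fin.cases ?_ ?_ q
        · simp only [Fin.cons_zero]; exact heig_ys w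
        · intro p; simp only [Fin.cons_succ]; exact hc p w
      funext v
      rw [ceDiff_wedgeF f ystar D hbr (Fin.cons ystar ξ) (Fin.cons 0 c) hc' v]
      have hdup : wedgeF (Fin.cons ystar (Fin.cons ystar ξ)) v = 0 := by
        refine wedgeF_eq_zero_of_dup _ (a := 0) (b := 1) ?_ ?_ v
        · intro hc0
          have := congrArg Fin.val hc0
          simp at this
        · have h10 : (1 : Fin (k+2)) = Fin.succ 0 := by
            apply Fin.ext; simp
          rw [Fin.cons_zero, h10, Fin.cons_succ, Fin.cons_zero]
      rw [hdup]
      simp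
    exact LinearMap.mem_ker.1 (hle hω)
  · -- Part (2)
    intro j l
    constructor
    · -- j = l
      rintro rfl ω hω
      have hle : Submodule.span ℂ
          {w : AlternatingMap ℂ f ℂ (Fin (j+j)) |
            ∃ (s t : Finset (Fin n)) (hs : s.card = j) (ht : t.card = j),
              w = wedgeF (Fin.append
                    (fun m => xstar (s.orderIsoOfFin hs m))
                    (fun m => yistar (t.orderIsoOfFin ht m)))}
          ≤ LinearMap.ker (ceDiff f (j+j)) := by
        rw [Submodule.span_le]
        rintro w ⟨s, t, hs, ht, rfl⟩
        rw [SetLike.mem_coe, LinearMap.mem_ker]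
        set fam := Fin.append
            (fun m => xstar (s.orderIsoOfFin hs m))
            (fun m => yistar (t.orderIsoOfFin ht m)) with hfam
        set cfam : Fin (j+j) → ℂ := Fin.append (fun _ => (1:ℂ)) (fun _ => (-1:ℂ)) with hcfam
        have hc : ∀ (q : Fin (j+j)) (w : f), fam q (D w) = cfam q * fam q w := by
          intro q w
          refine Fin.addCases (motive := fun q => fam q (D w) = cfam q * fam q w) ?_ ?_ q
          · intro p
            rw [hfam, hcfam]
            simp only [Fin.append_left]
            exact heig_x _ w
          · intro p
            rw [hfam, hcfam]
            simp only [Fin.append_right]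
            exact heig_yi _ w
        have hsum : ∑ q, cfam q = 0 := by
          rw [hcfam, Fin.sum_univ_add]
          simp only [Fin.append_left, Fin.append_right, Finset.sum_const, Finset.card_univ,
            Fintype.card_fin, nsmul_eq_mul, mul_one, mul_neg]
          ring
        funext v
        rw [ceDiff_wedgeF f ystar D hbr fam cfam hc v, hsum]
        simp
      exact LinearMap.mem_ker.1 (hle hω)
    · -- j ≠ l
      intro hjl
      set c : ℂ := (j : ℂ) - (l : ℂ) with hc_def
      have hc0 : c ≠ 0 := by
        rw [hc_def]
        intro h
        apply hjl
        have : (j : ℂ) = (l : ℂ) := by linear_combination h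
        exact_mod_cast this
      set S : Set (AlternatingMap ℂ f ℂ (Fin (j+l))) :=
        {w | ∃ (s t : Finset (Fin n)) (hs : s.card = j) (ht : t.card = l),
            w = wedgeF (Fin.append
                  (fun m => xstar (s.orderIsoOfFin hs m))
                  (fun m => yistar (t.orderIsoOfFin ht m)))} with hS
      set S' : Set (AlternatingMap ℂ f ℂ (Fin (j+l+1))) :=
        {w | ∃ (s t : Finset (Fin n)) (hs : s.card = j) (ht : t.card = l),
            w = wedgeF (Fin.cons ystar (Fin.append
                  (fun m => xstar (s.orderIsoOfFin hs m))
                  (fun m => yistar (t.orderIsoOfFin ht m))))} with hS'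
      -- family facts
      have hfam_eig : ∀ (s t : Finset (Fin n)) (hs : s.card = j) (ht : t.card = l),
          (∀ (q : Fin (j+l)) (w : f),
            (Fin.append (fun m => xstar (s.orderIsoOfFin hs m))
              (fun m => yistar (t.orderIsoOfFin ht m)) : Fin (j+l) → (f →ₗ[ℂ] ℂ)) q (D w)
            = (Fin.append (fun _ => (1:ℂ)) (fun _ => (-1:ℂ)) : Fin (j+l) → ℂ) q *
              (Fin.append (fun m => xstar (s.orderIsoOfFin hs m))
                (fun m => yistar (t.orderIsoOfFin ht m)) : Fin (j+l) → (f →ₗ[ℂ] ℂ)) q w) := by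
        intro s t hs ht q w
        refine Fin.addCases (motive := fun q =>
          (Fin.append (fun m => xstar (s.orderIsoOfFin hs m))
            (fun m => yistar (t.orderIsoOfFin ht m)) : Fin (j+l) → (f →ₗ[ℂ] ℂ)) q (D w)
          = (Fin.append (fun _ => (1:ℂ)) (fun _ => (-1:ℂ)) : Fin (j+l) → ℂ) q *
            (Fin.append (fun m => xstar (s.orderIsoOfFin hs m))
              (fun m => yistar (t.orderIsoOfFin ht m)) : Fin (j+l) → (f →ₗ[ℂ] ℂ)) q w) ?_ ?_ q
        · intro p
          simp only [Fin.append_left]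
          exact heig_x _ w
        · intro p
          simp only [Fin.append_right]
          exact heig_yi _ w
      have hsum : ∑ q, (Fin.append (fun _ => (1:ℂ)) (fun _ => (-1:ℂ)) : Fin (j+l) → ℂ) q = c := by
        rw [Fin.sum_univ_add]
        simp only [Fin.append_left, Fin.append_right, Finset.sum_const, Finset.card_univ,
          Fintype.card_fin, nsmul_eq_mul, mul_one, mul_neg]
        rw [hc_def]
        ring
      -- the generator identity
      have hgen : ∀ (s t : Finset (Fin n)) (hs : s.card = j) (ht : t.card = l),
          ceDiff f (j+l) (wedgeF (Fin.append
              (fun m => xstar (s.orderIsoOfFin hs m))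
              (fun m => yistar (t.orderIsoOfFin ht m))))
          = (-c) • ⇑(wedgeF (Fin.cons ystar (Fin.append
              (fun m => xstar (s.orderIsoOfFin hs m))
              (fun m => yistar (t.orderIsoOfFin ht m))))) := by
        intro s t hs ht
        funext v
        rw [ceDiff_wedgeF f ystar D hbr _ _ (hfam_eig s t hs ht) v, hsum]
        simp [smul_eq_mul]
      constructor
      · -- injectivity
        -- span-stable properties
        have hP1 : ∀ ω' ∈ Submodule.span ℂ S, ∀ (u : Fin (j+l) → f) (m : Fin (j+l)),
            u m = y → ω' u = 0 := by
          intro ω' hω'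
          induction hω' using Submodule.span_induction with
          | mem w hw =>
              obtain ⟨s, t, hs, ht, rfl⟩ := hw
              intro u m hm
              refine wedgeF_eq_zero_of_row _ u m ?_
              intro q
              rw [hm]
              refine Fin.addCases (motive := fun q =>
                (Fin.append (fun m => xstar (s.orderIsoOfFin hs m))
                  (fun m => yistar (t.orderIsoOfFin ht m)) : Fin (j+l) → (f →ₗ[ℂ] ℂ)) q y = 0)
                ?_ ?_ q
              · intro p; simp only [Fin.append_left]; exact hxs_y _
              · intro p; simp only [Fin.append_right]; exact hyis_y _
          | zero => intro u m hm; simp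
          | add a a' ha ha' iha iha' =>
              intro u m hm
              simp only [AlternatingMap.add_apply, iha u m hm, iha' u m hm, add_zero]
          | smul r a ha iha =>
              intro u m hm
              simp only [AlternatingMap.smul_apply, iha u m hm, smul_zero]
        have hP2 : ∀ ω' ∈ Submodule.span ℂ S, ∀ u : Fin (j+l) → f,
            ∑ m : Fin (j+l), ω' (Function.update u m (D (u m))) = c * ω' u := by
          intro ω' hω'
          induction hω' using Submodule.span_induction with
          | mem w hw =>
              obtain ⟨s, t, hs, ht, rfl⟩ := hw
              intro u
              rw [wedgeF_sum_update _ D _ (hfam_eig s t hs ht) u, hsum]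
          | zero => intro u; simp
          | add a a' ha ha' iha iha' =>
              intro u
              simp only [AlternatingMap.add_apply]
              rw [Finset.sum_add_distrib, iha u, iha' u]
              ring
          | smul r a ha iha =>
              intro u
              simp only [AlternatingMap.smul_apply, smul_eq_mul]
              rw [← Finset.mul_sum, iha u]
              ring
        -- vanishing lemma
        have hvanish : ∀ ω' ∈ Submodule.span ℂ S, ceDiff f (j+l) ω' = 0 → ω' = 0 := by
          intro ω' hω' hker
          have h0 : ω'.toMultilinearMap
              = (0 : AlternatingMap ℂ f ℂ (Fin (j+l))).toMultilinearMap := by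
            apply Basis.ext_multilinear (fun _ => b)
            intro idx
            have hgoal : ω' (fun m => b (idx m)) = 0 → (True) := fun _ => trivial
            by_cases hy' : ∃ m, idx m = Sum.inl ()
            · obtain ⟨m, hm⟩ := hy'
              have := hP1 ω' hω' (fun m => b (idx m)) m
                (by show b (idx m) = y; rw [hm]; exact hy.symm)
              simpa using this
            · push_neg at hy'
              set v : Fin (j+l+1) → f := Fin.cons y (fun m => b (idx m)) with hv
              have h3 := congrFun hker v
              rw [ceDiff_apply_eq f ystar D hbr] at h3
              have h4 : ∀ i : Fin (j+l+1),
                  ∑ m : Fin (j+l), ω' (Function.update (v ∘ i.succAbove) m (D (v (i.succAbove m))))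
                    = c * ω' (v ∘ i.succAbove) := by
                intro i
                have h := hP2 ω' hω' (v ∘ i.succAbove)
                simpa only [Function.comp_apply] using h
              simp only [h4] at h3
              rw [Fin.sum_univ_succ] at h3
              have hv0 : v 0 = y := by rw [hv]; exact Fin.cons_zero _ _
              have hvs : ∀ i' : Fin (j+l), v (Fin.succ i') = b (idx i') := fun i' => by
                rw [hv]; exact Fin.cons_succ _ _ _
              have h5' : ∀ i' : Fin (j+l),
                  (-1:ℂ)^(((Fin.succ i' : Fin (j+l+1))) : ℕ) * ystar (v (Fin.succ i'))
                    * (c * ω' (v ∘ (Fin.succ i').succAbove)) = 0 := by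
                intro i'
                rw [hvs i']
                rcases hcase : idx i' with u | sb
                · cases u; exact absurd hcase (hy' i')
                · rw [hys_b]
                  ring
              rw [Finset.sum_congr rfl (fun i' _ => h5' i')] at h3
              simp only [Finset.sum_const_zero, add_zero, hv0, hys_y, Fin.val_zero,
                pow_zero, one_mul, mul_one] at h3
              have h6 : v ∘ (0 : Fin (j+l+1)).succAbove = fun m => b (idx m) := by
                funext m
                rw [Function.comp_apply, Fin.succAbove_zero]
                exact hvs m
              rw [h6] at h3
              have h7 : c * ω' (fun m => b (idx m)) = 0 := by
                have h3' : (0:ℂ) = -(c * ω' fun m => b (idx m)) := by simpa using h3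
                exact neg_eq_zero.mp h3'.symm
              have h8 : ω' (fun m => b (idx m)) = 0 :=
                (mul_eq_zero.mp h7).resolve_left hc0
              simpa using h8
          have : ω' = 0 := by
            ext u
            have h := congrArg (fun (M : MultilinearMap ℂ (fun _ : Fin (j+l) => f) ℂ) => M u) h0
            simpa using h
          exact this
        intro ω₁ h₁ ω₂ h₂ heq
        have h₁' : ω₁ ∈ Submodule.span ℂ S := h₁
        have h₂' : ω₂ ∈ Submodule.span ℂ S := h₂
        have hsub : ω₁ - ω₂ ∈ Submodule.span ℂ S := sub_mem h₁' h₂'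
        have hker : ceDiff f (j+l) (ω₁ - ω₂) = 0 := by
          rw [map_sub, heq, sub_self]
        have := hvanish _ hsub hker
        exact sub_eq_zero.mp this
      · -- image equality
        have hspan_eq : Submodule.span ℂ ((ceDiff f (j+l)) '' S)
            = Submodule.span ℂ ((altCoe f (j+l+1)) '' S') := by
          apply le_antisymm
          · rw [Submodule.span_le]
            rintro _ ⟨w, ⟨s, t, hs, ht, rfl⟩, rfl⟩
            rw [hgen s t hs ht]
            refine Submodule.smul_mem _ _ (Submodule.subset_span ?_)
            exact ⟨_, ⟨s, t, hs, ht, rfl⟩, rfl⟩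
          · rw [Submodule.span_le]
            rintro _ ⟨w, ⟨s, t, hs, ht, rfl⟩, rfl⟩
            have hmem : ceDiff f (j+l) (wedgeF (Fin.append
                (fun m => xstar (s.orderIsoOfFin hs m))
                (fun m => yistar (t.orderIsoOfFin ht m))))
                ∈ Submodule.span ℂ ((ceDiff f (j+l)) '' S) :=
              Submodule.subset_span ⟨_, ⟨s, t, hs, ht, rfl⟩, rfl⟩
            have heq2 : altCoe f (j+l+1) (wedgeF (Fin.cons ystar (Fin.append
                (fun m => xstar (s.orderIsoOfFin hs m))
                (fun m => yistar (t.orderIsoOfFin ht m)))))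
                = (-c)⁻¹ • (ceDiff f (j+l) (wedgeF (Fin.append
                    (fun m => xstar (s.orderIsoOfFin hs m))
                    (fun m => yistar (t.orderIsoOfFin ht m))))) := by
              rw [hgen s t hs ht, smul_smul, inv_mul_cancel₀ (neg_ne_zero.2 hc0), one_smul]
              rfl
            rw [heq2]
            exact Submodule.smul_mem _ _ hmem
        have hfun : (fun φ : AlternatingMap ℂ f ℂ (Fin (j+l+1)) => (φ : (Fin (j+l+1) → f) → ℂ))
            = ⇑(altCoe f (j+l+1)) := rfl
        calc (ceDiff f (j+l)) '' ↑(Submodule.span ℂ S)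
            = ↑(Submodule.map (ceDiff f (j+l)) (Submodule.span ℂ S)) :=
              (Submodule.map_coe _ _).symm
          _ = ↑(Submodule.span ℂ ((ceDiff f (j+l)) '' S)) := by rw [Submodule.map_span]
          _ = ↑(Submodule.span ℂ ((altCoe f (j+l+1)) '' S')) := by rw [hspan_eq]
          _ = ↑(Submodule.map (altCoe f (j+l+1)) (Submodule.span ℂ S')) := by
              rw [Submodule.map_span]
          _ = (fun φ : AlternatingMap ℂ f ℂ (Fin (j+l+1)) => (φ : (Fin (j+l+1) → f) → ℂ)) ''
              ↑(Submodule.span ℂ S') := by rw [hfun]; exact Submodule.map_coe _ _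
end
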